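/- Let (V; f, g) be a dual-modular instance and θ : ℝ≥0 → ℝ convex. If (p, q) is a minimizer of Φ_θ(p, q) = D_θ(f^p ‖ g^q) over all pairs of probability distributions on permutations of V, then there exists a locally maximin solution (p̂, q̂) that is also a minimizer; if moreover θ is strictly convex, then (p̂, q̂) can be chosen so that (f^{p̂}, g^{q̂}) = (f^p, g^q), hence the induced densities are preserved. The same conclusions hold for the minimization restricted to the diagonal p = q. -/

import Mathlib

open Finset

variable {V : Type*} [Fintype V] [DecidableEq V]

/-- A set function is supermodular. -/
def Supermodular (f : Finset V → ℝ) : Prop :=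
  ∀ A B : Finset V, f A + f B ≤ f (A ∩ B) + f (A ∪ B)

/-- A set function is submodular. -/
def Submodular (g : Finset V → ℝ) : Prop :=
  ∀ A B : Finset V, g (A ∩ B) + g (A ∪ B) ≤ g A + g B

/-- A set function is monotone. -/
def MonotoneFn (f : Finset V → ℝ) : Prop :=
  ∀ A B : Finset V, A ⊆ B → f A ≤ f B

/-- A set function is strictly monotone. -/
def StrictMonoFn (g : Finset V → ℝ) : Prop :=
  ∀ A B : Finset V, A ⊂ B → g A < g B

/-- A dual-modular instance `(V; f, g)`: `f` is a nonnegative monotone supermodular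
reward function, `g` is a nonnegative strictly monotone submodular cost function,
both vanishing on the empty set. -/
structure DualModular (f g : Finset V → ℝ) : Prop where
  f_nonneg : ∀ A, 0 ≤ f A
  g_nonneg : ∀ A, 0 ≤ g A
  f_empty : f ∅ = 0
  g_empty : g ∅ = 0
  f_mono : MonotoneFn f
  g_strictMono : StrictMonoFn g
  f_supermodular : Supermodular f
  g_submodular : Submodular g

/-- Density of a subset. -/
noncomputable def density (f g : Finset V → ℝ) (S : Finset V) : ℝ := f S / g S

/-- Marginal contribution `h(S|A) = h(S ∪ A) - h(A)`. -/
def marginal (h : Finset V → ℝ) (S A : Finset V) : ℝ := h (S ∪ A) - h A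

/-- Marginal density `ρ(S|A) = f(S|A)/g(S|A)`. -/
noncomputable def margDensity (f g : Finset V → ℝ) (S A : Finset V) : ℝ :=
  marginal f S A / marginal g S A

/-- `S_{<i}`: the union of earlier parts in an indexed family. -/
def below {k : ℕ} (S : Fin k → Finset V) (i : Fin k) : Finset V :=
  (Finset.univ.filter (fun j => j < i)).biUnion S

/-- The density decomposition `V = S₁ ∪ … ∪ S_k`: each `S i` is a nonempty maximal
densest subset of the remaining instance with marginal functions. -/
structure IsDensityDecomposition (f g : Finset V → ℝ) {k : ℕ} (S : Fin k → Finset V) :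
    Prop where
  nonempty : ∀ i, (S i).Nonempty
  disj : ∀ i, Disjoint (S i) (below S i)
  cover : Finset.univ.biUnion S = (Finset.univ : Finset V)
  maxDensity : ∀ i, ∀ T : Finset V, T.Nonempty → Disjoint T (below S i) →
    margDensity f g T (below S i) ≤ margDensity f g (S i) (below S i)
  maximal : ∀ i, ∀ T : Finset V, T.Nonempty → Disjoint T (below S i) →
    margDensity f g (S i) (below S i) ≤ margDensity f g T (below S i) → T ⊆ S i

/-- `ρ_i`, the density of the `i`-th component of the decomposition. -/
noncomputable def decompDensity (f g : Finset V → ℝ) {k : ℕ} (S : Fin k → Finset V)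
    (i : Fin k) : ℝ :=
  margDensity f g (S i) (below S i)

/-- Membership in the base contrapolymatroid `B≥_f`. -/
def memBf (f : Finset V → ℝ) (x : V → ℝ) : Prop :=
  (∀ v, 0 ≤ x v) ∧ (∑ v, x v = f Finset.univ) ∧ ∀ A : Finset V, f A ≤ ∑ v ∈ A, x v

/-- Membership in the base polymatroid `B≤_g`. -/
def memBg (g : Finset V → ℝ) (y : V → ℝ) : Prop :=
  (∀ v, 0 ≤ y v) ∧ (∑ v, y v = g Finset.univ) ∧ ∀ A : Finset V, ∑ v ∈ A, y v ≤ g A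

/-- An allocation is a pair `(x, y) ∈ B≥_f × B≤_g`. -/
def Allocation (f g : Finset V → ℝ) (x y : V → ℝ) : Prop := memBf f x ∧ memBg g y

/-- The locally maximin condition for an allocation. -/
def LocallyMaximin (f g : Finset V → ℝ) (x y : V → ℝ) : Prop :=
  ∀ ρ : ℝ, 0 < ρ →
    (∑ v ∈ Finset.univ.filter (fun v => ρ ≤ x v / y v), x v
       = f (Finset.univ.filter (fun v => ρ ≤ x v / y v))) ∧
    (∑ v ∈ Finset.univ.filter (fun v => ρ ≤ x v / y v), y v
       = g (Finset.univ.filter (fun v => ρ ≤ x v / y v)))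

/-- The multiset of induced densities, sorted in non-increasing order. -/
noncomputable def sortedDensities (x y : V → ℝ) : List ℝ :=
  ((Finset.univ.val.map (fun v => x v / y v)).sort (· ≤ ·)).reverse

/-- An allocation is lexicographically optimal if its non-increasingly sorted density
vector is lexicographically minimal among all allocations. -/
def LexOptimal (f g : Finset V → ℝ) (x y : V → ℝ) : Prop :=
  Allocation f g x y ∧
  ∀ x' y' : V → ℝ, Allocation f g x' y' → sortedDensities x y ≤ sortedDensities x' y'

/-- The hockey-stick divergence `HS_γ(x ‖ y)`. -/
noncomputable def HS (γ : ℝ) (x y : V → ℝ) : ℝ := ∑ u, max (x u - γ * y u) 0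

/-- The `θ`-divergence `D_θ(x ‖ y) = Σ_u y_u · θ(x_u / y_u)`. -/
noncomputable def Dtheta (θ : ℝ → ℝ) (x y : V → ℝ) : ℝ := ∑ u, y u * θ (x u / y u)

/-- Permutations of `V`, encoded as bijections to positions `Fin |V|`;
`u ≺_σ v` iff `σ u < σ v`. -/
abbrev Perms (V : Type*) [Fintype V] := V ≃ Fin (Fintype.card V)

/-- `h^σ(u)`: the marginal contribution of `u` given the elements preceding it in `σ`. -/
def permVal (h : Finset V → ℝ) (σ : Perms V) (u : V) : ℝ :=
  h (insert u (Finset.univ.filter (fun w => σ w < σ u))) -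
    h (Finset.univ.filter (fun w => σ w < σ u))

/-- A probability distribution on permutations of `V`. -/
def IsDist (p : Perms V → ℝ) : Prop := (∀ σ, 0 ≤ p σ) ∧ ∑ σ, p σ = 1

/-- `h^p(u) = Σ_σ p_σ · h^σ(u)`. -/
noncomputable def distVal (h : Finset V → ℝ) (p : Perms V → ℝ) (u : V) : ℝ :=
  ∑ σ, p σ * permVal h σ u

/-- The density induced by a solution `(p, q)`. -/
noncomputable def solDensity (f g : Finset V → ℝ) (p q : Perms V → ℝ) (v : V) : ℝ :=
  distVal f p v / distVal g q v

/-- A solution `(p, q)` is locally maximin if whenever `u` has strictly larger induced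
density than `v`, every permutation with positive weight puts `u` before `v`. -/
def LocallyMaximinSol (f g : Finset V → ℝ) (p q : Perms V → ℝ) : Prop :=
  ∀ u v : V, solDensity f g p q v < solDensity f g p q u →
    ∀ σ : Perms V, (0 < p σ ∨ 0 < q σ) → σ u < σ v

/-- The convex-program objective `Φ_θ(p, q) = D_θ(f^p ‖ g^q)`. -/
noncomputable def Phi (θ : ℝ → ℝ) (f g : Finset V → ℝ) (p q : Perms V → ℝ) : ℝ :=
  Dtheta θ (distVal f p) (distVal g q)


set_option linter.unusedSectionVars false
set_option linter.unusedVariables false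
set_option maxHeartbeats 1000000

section blocks
variable (f g : Finset V → ℝ)
end blocks

-- prefix set
def pfx (σ : Perms V) (u : V) : Finset V := Finset.univ.filter (fun w => σ w < σ u)

lemma permVal_def' (h : Finset V → ℝ) (σ : Perms V) (u : V) :
    permVal h σ u = h (insert u (pfx σ u)) - h (pfx σ u) := rfl

lemma not_mem_pfx (σ : Perms V) (u : V) : u ∉ pfx σ u := by
  simp [pfx]

lemma permVal_nonneg {f : Finset V → ℝ} (hf : MonotoneFn f) (σ : Perms V) (u : V) :
    0 ≤ permVal f σ u :=
  sub_nonneg.2 (hf _ _ (subset_insert _ _))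

lemma permVal_pos {g : Finset V → ℝ} (hg : StrictMonoFn g) (σ : Perms V) (u : V) :
    0 < permVal g σ u :=
  sub_pos.2 (hg _ _ (ssubset_insert (not_mem_pfx σ u)))

lemma exists_pos_of_isDist {p : Perms V → ℝ} (hp : IsDist p) : ∃ σ, 0 < p σ := by
  by_contra hc
  push_neg at hc
  have : (∑ σ, p σ) ≤ 0 := Finset.sum_nonpos (fun σ _ => hc σ)
  rw [hp.2] at this; linarith

lemma distVal_nonneg {f : Finset V → ℝ} (hf : MonotoneFn f) {p : Perms V → ℝ}
    (hp : IsDist p) (u : V) : 0 ≤ distVal f p u :=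
  Finset.sum_nonneg fun σ _ => mul_nonneg (hp.1 σ) (permVal_nonneg hf σ u)

lemma distVal_pos {g : Finset V → ℝ} (hg : StrictMonoFn g) {q : Perms V → ℝ}
    (hq : IsDist q) (u : V) : 0 < distVal g q u := by
  obtain ⟨σ0, hσ0⟩ := exists_pos_of_isDist hq
  have h1 : 0 < q σ0 * permVal g σ0 u := mul_pos hσ0 (permVal_pos hg σ0 u)
  calc (0:ℝ) < q σ0 * permVal g σ0 u := h1
    _ ≤ ∑ σ, q σ * permVal g σ u := Finset.single_le_sum
        (fun σ _ => mul_nonneg (hq.1 σ) (le_of_lt (permVal_pos hg σ u))) (mem_univ σ0)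

-- telescoping over initial segments
lemma sum_permVal_initseg {h : Finset V → ℝ} (h0 : h ∅ = 0) (σ : Perms V) (k : ℕ) :
    ∑ w ∈ Finset.univ.filter (fun w => (σ w : ℕ) < k), permVal h σ w
      = h (Finset.univ.filter (fun w => (σ w : ℕ) < k)) := by
  induction k with
  | zero => simp [h0]
  | succ k ih =>
    by_cases hk : k < Fintype.card V
    · set w0 : V := σ.symm ⟨k, hk⟩ with hw0
      have hσw0 : (σ w0 : ℕ) = k := by simp [hw0]
      have hset : Finset.univ.filter (fun w => (σ w : ℕ) < k + 1)
          = insert w0 (Finset.univ.filter (fun w => (σ w : ℕ) < k)) := by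
        ext w
        simp only [mem_filter, mem_univ, true_and, mem_insert]
        constructor
        · intro hw
          rcases Nat.lt_succ_iff_lt_or_eq.1 hw with h' | h'
          · exact Or.inr h'
          · left
            have : σ w = σ w0 := Fin.ext (by omega)
            exact σ.injective this
        · rintro (rfl | hw)
          · omega
          · omega
      have hw0n : w0 ∉ Finset.univ.filter (fun w => (σ w : ℕ) < k) := by
        simp [hσw0]
      rw [hset, Finset.sum_insert hw0n, ih]
      have hpfx : pfx σ w0 = Finset.univ.filter (fun w => (σ w : ℕ) < k) := by
        ext w; simp [pfx, Fin.lt_def, hσw0]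
      rw [permVal_def', hpfx]
      ring
    · have hset : Finset.univ.filter (fun w => (σ w : ℕ) < k + 1)
          = Finset.univ.filter (fun w => (σ w : ℕ) < k) := by
        ext w
        have := (σ w).isLt
        simp only [mem_filter, mem_univ, true_and]
        omega
      rw [hset, ih]

lemma sum_permVal_univ {h : Finset V → ℝ} (h0 : h ∅ = 0) (σ : Perms V) :
    ∑ w, permVal h σ w = h Finset.univ := by
  have := sum_permVal_initseg h0 σ (Fintype.card V)
  have hset : Finset.univ.filter (fun w => (σ w : ℕ) < Fintype.card V)
      = (Finset.univ : Finset V) := by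
    ext w; simp [(σ w).isLt]
  rw [hset] at this; exact this

-- position lemma: if every element of W precedes every element outside W,
-- then W is exactly an initial segment.
lemma initseg_of_front {σ : Perms V} {W : Finset V}
    (hfront : ∀ w ∈ W, ∀ v, v ∉ W → σ w < σ v) :
    W = Finset.univ.filter (fun w => (σ w : ℕ) < W.card) := by
  have hsub : ∀ w ∈ W, (σ w : ℕ) < W.card := by
    intro w hw
    have hsubset : Finset.univ.filter (fun v => σ v < σ w) ⊆ W.erase w := by
      intro v hv
      simp only [mem_filter, mem_univ, true_and] at hv
      have hvW : v ∈ W := by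
        by_contra hvn
        exact absurd hv (not_lt.2 (le_of_lt (hfront w hw v hvn)))
      refine mem_erase.2 ⟨?_, hvW⟩
      intro hvw; rw [hvw] at hv; exact lt_irrefl _ hv
    have hcard : (Finset.univ.filter (fun v => σ v < σ w)).card = (σ w : ℕ) := by
      rw [← Fin.card_Iio (σ w)]
      apply Finset.card_bij (fun v _ => σ v)
      · intro a ha; simp only [mem_filter, mem_univ, true_and] at ha; simpa [Finset.mem_Iio]
      · intro a _ b _ hab; exact σ.injective hab
      · intro b hb
        refine ⟨σ.symm b, ?_, by simp⟩
        simp only [mem_filter, mem_univ, true_and, Equiv.apply_symm_apply]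
        simpa [Finset.mem_Iio] using hb
    have := Finset.card_le_card hsubset
    rw [hcard, Finset.card_erase_of_mem hw] at this
    have hWpos : 0 < W.card := Finset.card_pos.2 ⟨w, hw⟩
    omega
  -- now W ⊆ filter and same card
  have hsubset : W ⊆ Finset.univ.filter (fun w => (σ w : ℕ) < W.card) := by
    intro w hw; simp only [mem_filter, mem_univ, true_and]; exact hsub w hw
  have hcard2 : (Finset.univ.filter (fun w => (σ w : ℕ) < W.card)).card ≤ W.card := by
    have : (Finset.univ.filter (fun w => (σ w : ℕ) < W.card)).card
        = (Finset.univ.filter (fun i : Fin (Fintype.card V) => (i : ℕ) < W.card)).card := by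
      apply Finset.card_bij (fun v _ => σ v)
      · intro a ha; simp only [mem_filter, mem_univ, true_and] at ha ⊢; exact ha
      · intro a _ b _ hab; exact σ.injective hab
      · intro b hb
        refine ⟨σ.symm b, ?_, by simp⟩
        simp only [mem_filter, mem_univ, true_and, Equiv.apply_symm_apply] at hb ⊢
        exact hb
    rw [this]
    by_cases hle : W.card ≤ Fintype.card V
    · have hss : Finset.univ.filter (fun i : Fin (Fintype.card V) => (i : ℕ) < W.card) ⊆ Finset.map (Fin.castLEEmb hle) Finset.univ := by
        intro i hi
        simp only [mem_filter, mem_univ, true_and] at hi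
        simp only [Finset.mem_map, Finset.mem_univ]
        exact ⟨⟨(i : ℕ), hi⟩, trivial, by simp [Fin.castLEEmb]⟩
      have := Finset.card_le_card hss
      simpa using this
    · push_neg at hle
      calc (Finset.univ.filter (fun i : Fin (Fintype.card V) => (i : ℕ) < W.card)).card
          ≤ (Finset.univ : Finset (Fin (Fintype.card V))).card := Finset.card_le_card (Finset.filter_subset _ _)
        _ = Fintype.card V := by simp
        _ ≤ W.card := le_of_lt hle
  exact Finset.eq_of_subset_of_card_le hsubset hcard2

/-- the permutation obtained by exchanging the positions of `w1` and `w2`. -/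
def swp (σ : Perms V) (w1 w2 : V) : Perms V := (Equiv.swap w1 w2).trans σ

section swap
variable (σ : Perms V) (w1 w2 : V) (hadj : ((σ w2 : ℕ) = (σ w1 : ℕ) + 1))

lemma swp_apply_w1 : swp σ w1 w2 w1 = σ w2 := by simp [swp]
lemma swp_apply_w2 : swp σ w1 w2 w2 = σ w1 := by simp [swp]
lemma swp_apply_other {u : V} (h1 : u ≠ w1) (h2 : u ≠ w2) : swp σ w1 w2 u = σ u := by
  simp [swp, Equiv.swap_apply_of_ne_of_ne h1 h2]
lemma w1_not_mem_pfx_w1 : w1 ∉ pfx σ w1 := by simp [pfx]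
lemma swp_symm_eq : (swp σ w1 w2).symm = σ.symm.trans (Equiv.swap w1 w2) := by
  ext i
  simp [swp]

include hadj

lemma swap_ne : w1 ≠ w2 := by
  intro h; rw [h] at hadj; omega

lemma pfx_swp_other {u : V} (h1 : u ≠ w1) (h2 : u ≠ w2) :
    pfx (swp σ w1 w2) u = pfx σ u := by
  have hu : swp σ w1 w2 u = σ u := swp_apply_other σ w1 w2 h1 h2
  have hσu1 : (σ u : ℕ) ≠ (σ w1 : ℕ) := fun h => h1 (σ.injective (Fin.ext h))
  have hσu2 : (σ u : ℕ) ≠ (σ w2 : ℕ) := fun h => h2 (σ.injective (Fin.ext h))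
  ext w
  simp only [pfx, mem_filter, mem_univ, true_and, hu]
  by_cases hw1 : w = w1
  · rw [hw1, swp_apply_w1 σ w1 w2]
    simp only [Fin.lt_def]
    omega
  · by_cases hw2 : w = w2
    · rw [hw2, swp_apply_w2 σ w1 w2]
      simp only [Fin.lt_def]
      omega
    · rw [swp_apply_other σ w1 w2 hw1 hw2]

lemma permVal_swp_other (h : Finset V → ℝ) {u : V} (h1 : u ≠ w1) (h2 : u ≠ w2) :
    permVal h (swp σ w1 w2) u = permVal h σ u := by
  rw [permVal_def', permVal_def', pfx_swp_other σ w1 w2 hadj h1 h2]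

lemma w2_not_mem_pfx_w1 : w2 ∉ pfx σ w1 := by
  simp only [pfx, mem_filter, mem_univ, true_and, Fin.lt_def]; omega

lemma pfx_w2_eq : pfx σ w2 = insert w1 (pfx σ w1) := by
  ext w
  simp only [pfx, mem_filter, mem_univ, true_and, mem_insert, Fin.lt_def]
  constructor
  · intro hw
    by_cases hww : w = w1
    · exact Or.inl hww
    · right
      have : (σ w : ℕ) ≠ (σ w1 : ℕ) := fun h => hww (σ.injective (Fin.ext h))
      omega
  · rintro (rfl | hw) <;> omega

lemma pfx_swp_w2 : pfx (swp σ w1 w2) w2 = pfx σ w1 := by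
  ext w
  simp only [pfx, mem_filter, mem_univ, true_and, Fin.lt_def]
  rw [swp_apply_w2 σ w1 w2]
  by_cases hw1 : w = w1
  · rw [hw1, swp_apply_w1 σ w1 w2]; omega
  · by_cases hw2 : w = w2
    · rw [hw2, swp_apply_w2 σ w1 w2]; omega
    · rw [swp_apply_other σ w1 w2 hw1 hw2]

lemma pfx_swp_w1 : pfx (swp σ w1 w2) w1 = insert w2 (pfx σ w1) := by
  ext w
  simp only [pfx, mem_filter, mem_univ, true_and, mem_insert, Fin.lt_def]
  rw [swp_apply_w1 σ w1 w2]
  by_cases hw1 : w = w1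
  · rw [hw1, swp_apply_w1 σ w1 w2]
    constructor
    · intro h; omega
    · rintro (h | h)
      · exact absurd h (swap_ne σ w1 w2 hadj)
      · omega
  · by_cases hw2 : w = w2
    · rw [hw2, swp_apply_w2 σ w1 w2]
      constructor
      · intro _; left; rfl
      · intro _; omega
    · rw [swp_apply_other σ w1 w2 hw1 hw2]
      constructor
      · intro h; right
        have h2' : (σ w : ℕ) ≠ (σ w2 : ℕ) := fun h' => hw2 (σ.injective (Fin.ext h'))
        have h1' : (σ w : ℕ) ≠ (σ w1 : ℕ) := fun h' => hw1 (σ.injective (Fin.ext h'))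
        omega
      · rintro (h | h)
        · exact absurd h hw2
        · omega

lemma permVal_swp_sum (h : Finset V → ℝ) :
    permVal h (swp σ w1 w2) w1 + permVal h (swp σ w1 w2) w2
      = permVal h σ w1 + permVal h σ w2 := by
  have hne := swap_ne σ w1 w2 hadj
  rw [permVal_def', permVal_def', permVal_def', permVal_def',
    pfx_swp_w1 σ w1 w2 hadj, pfx_swp_w2 σ w1 w2 hadj, pfx_w2_eq σ w1 w2 hadj,
    Finset.insert_comm]
  ring

lemma permVal_swp_le_f {f : Finset V → ℝ} (hf : Supermodular f) :
    permVal f (swp σ w1 w2) w2 ≤ permVal f σ w2 := by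
  have hne := swap_ne σ w1 w2 hadj
  have h1 := w1_not_mem_pfx_w1 σ w1
  have h2 := w2_not_mem_pfx_w1 σ w1 w2 hadj
  rw [permVal_def', permVal_def', pfx_swp_w2 σ w1 w2 hadj, pfx_w2_eq σ w1 w2 hadj]
  have := hf (insert w1 (pfx σ w1)) (insert w2 (pfx σ w1))
  have hcap : insert w1 (pfx σ w1) ∩ insert w2 (pfx σ w1) = pfx σ w1 := by
    ext w
    simp only [mem_inter, mem_insert]
    constructor
    · rintro ⟨h1' | hP1, h2' | hP2⟩
      · exact absurd (h1'.symm.trans h2') hne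
      · rw [h1'] at hP2; exact absurd hP2 h1
      · rw [h2'] at hP1; exact absurd hP1 h2
      · exact hP1
    · intro hw; exact ⟨Or.inr hw, Or.inr hw⟩
  have hcup : insert w1 (pfx σ w1) ∪ insert w2 (pfx σ w1)
      = insert w2 (insert w1 (pfx σ w1)) := by
    ext w; simp only [mem_union, mem_insert]; tauto
  rw [hcap, hcup] at this
  have : f (insert w2 (pfx σ w1)) - f (pfx σ w1)
      ≤ f (insert w2 (insert w1 (pfx σ w1))) - f (insert w1 (pfx σ w1)) := by linarith
  exact this

lemma permVal_swp_ge_g {g : Finset V → ℝ} (hg : Submodular g) :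
    permVal g σ w2 ≤ permVal g (swp σ w1 w2) w2 := by
  have hne := swap_ne σ w1 w2 hadj
  have h1 := w1_not_mem_pfx_w1 σ w1
  have h2 := w2_not_mem_pfx_w1 σ w1 w2 hadj
  rw [permVal_def', permVal_def', pfx_swp_w2 σ w1 w2 hadj, pfx_w2_eq σ w1 w2 hadj]
  have := hg (insert w1 (pfx σ w1)) (insert w2 (pfx σ w1))
  have hcap : insert w1 (pfx σ w1) ∩ insert w2 (pfx σ w1) = pfx σ w1 := by
    ext w
    simp only [mem_inter, mem_insert]
    constructor
    · rintro ⟨h1' | hP1, h2' | hP2⟩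
      · exact absurd (h1'.symm.trans h2') hne
      · rw [h1'] at hP2; exact absurd hP2 h1
      · rw [h2'] at hP1; exact absurd hP1 h2
      · exact hP1
    · intro hw; exact ⟨Or.inr hw, Or.inr hw⟩
  have hcup : insert w1 (pfx σ w1) ∪ insert w2 (pfx σ w1)
      = insert w2 (insert w1 (pfx σ w1)) := by
    ext w; simp only [mem_union, mem_insert]; tauto
  rw [hcap, hcup] at this
  have : g (insert w2 (insert w1 (pfx σ w1))) - g (insert w1 (pfx σ w1))
      ≤ g (insert w2 (pfx σ w1)) - g (pfx σ w1) := by linarith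
  exact this

end swap

/-- move mass `t` from `σ` to `σ'` -/
noncomputable def moveD (p : Perms V → ℝ) (σ σ' : Perms V) (t : ℝ) : Perms V → ℝ :=
  fun τ => p τ + (if τ = σ' then t else 0) - (if τ = σ then t else 0)

lemma moveD_isDist {p : Perms V → ℝ} (hp : IsDist p) {σ σ' : Perms V} (hne : σ ≠ σ')
    {t : ℝ} (ht0 : 0 ≤ t) (ht1 : t ≤ p σ) : IsDist (moveD p σ σ' t) := by
  constructor
  · intro τ
    unfold moveD
    by_cases h1 : τ = σ
    · have h2 : τ ≠ σ' := by rw [h1]; exact hne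
      rw [if_neg h2, if_pos h1, h1]
      linarith
    · rw [if_neg h1]
      by_cases h2 : τ = σ'
      · rw [if_pos h2]; have := hp.1 τ; linarith
      · rw [if_neg h2]; have := hp.1 τ; linarith
  · unfold moveD
    rw [Finset.sum_sub_distrib, Finset.sum_add_distrib, Finset.sum_ite_eq' , Finset.sum_ite_eq']
    simp [hp.2]

lemma moveD_distVal (h : Finset V → ℝ) (p : Perms V → ℝ) (σ σ' : Perms V) (t : ℝ)
    (u : V) : distVal h (moveD p σ σ' t) u
      = distVal h p u + t * (permVal h σ' u - permVal h σ u) := by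
  unfold distVal moveD
  rw [show (∑ τ, (p τ + (if τ = σ' then t else 0) - if τ = σ then t else 0) * permVal h τ u)
    = ∑ τ, (p τ * permVal h τ u + (if τ = σ' then t * permVal h τ u else 0)
        - (if τ = σ then t * permVal h τ u else 0)) from by
      apply Finset.sum_congr rfl
      intro τ _
      split_ifs <;> ring]
  rw [Finset.sum_sub_distrib, Finset.sum_add_distrib, Finset.sum_ite_eq', Finset.sum_ite_eq']
  simp only [Finset.mem_univ, if_pos]
  ring

lemma sum_diff_two {F F' : V → ℝ} {w1 w2 : V} (hne : w1 ≠ w2)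
    (hagree : ∀ u, u ≠ w1 → u ≠ w2 → F' u = F u) :
    ∑ u, F' u - ∑ u, F u = (F' w1 + F' w2) - (F w1 + F w2) := by
  have key : ∀ G : V → ℝ, ∑ u, G u = G w1 + G w2 + ∑ u ∈ (Finset.univ.erase w1).erase w2, G u := by
    intro G
    rw [show G w1 + G w2 + ∑ u ∈ (Finset.univ.erase w1).erase w2, G u
        = G w1 + (G w2 + ∑ u ∈ (Finset.univ.erase w1).erase w2, G u) from by ring]
    rw [Finset.add_sum_erase _ G (by simp [Finset.mem_erase, Ne.symm hne]),
      Finset.add_sum_erase _ G (by simp)]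
  rw [key F, key F']
  have : ∑ u ∈ (Finset.univ.erase w1).erase w2, F' u = ∑ u ∈ (Finset.univ.erase w1).erase w2, F u := by
    apply Finset.sum_congr rfl
    intro u hu
    simp only [Finset.mem_erase] at hu
    exact hagree u hu.2.1 hu.1
  rw [this]; ring

-- LEMMA A
lemma chord_le {θ : ℝ → ℝ} (hθ : ConvexOn ℝ (Set.Ici 0) θ) {a b c : ℝ}
    (ha : 0 ≤ a) (hab : a < b) (hc1 : a ≤ c) (hc2 : c ≤ b) :
    θ c ≤ θ a + (c - a) * ((θ b - θ a) / (b - a)) := by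
  have hba : (0:ℝ) < b - a := by linarith
  set lam := (b - c) / (b - a) with hlam
  have hlam0 : 0 ≤ lam := div_nonneg (by linarith) (le_of_lt hba)
  have hlam1 : lam ≤ 1 := by
    rw [hlam, div_le_one hba]; linarith
  have hc : c = lam * a + (1 - lam) * b := by
    field_simp [hlam]
    have h' : lam * (b - a) = b - c := by rw [hlam]; exact div_mul_cancel₀ _ (ne_of_gt hba)
    linear_combination h'
  have := hθ.2 (Set.mem_Ici.2 ha) (Set.mem_Ici.2 (by linarith : (0:ℝ) ≤ b)) hlam0
    (by linarith : (0:ℝ) ≤ 1 - lam) (by ring)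
  simp only [smul_eq_mul] at this
  rw [← hc] at this
  calc θ c ≤ lam * θ a + (1 - lam) * θ b := this
    _ = θ a + (c - a) * ((θ b - θ a) / (b - a)) := by
        rw [hlam]
        field_simp
        ring

lemma chord_lt {θ : ℝ → ℝ} (hθ : StrictConvexOn ℝ (Set.Ici 0) θ) {a b c : ℝ}
    (ha : 0 ≤ a) (hab : a < b) (hc1 : a < c) (hc2 : c < b) :
    θ c < θ a + (c - a) * ((θ b - θ a) / (b - a)) := by
  have hba : (0:ℝ) < b - a := by linarith
  set lam := (b - c) / (b - a) with hlam
  have hlam0 : 0 < lam := div_pos (by linarith) hba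
  have hlam1 : lam < 1 := by
    rw [hlam, div_lt_one hba]; linarith
  have hc : c = lam * a + (1 - lam) * b := by
    field_simp [hlam]
    have h' : lam * (b - a) = b - c := by rw [hlam]; exact div_mul_cancel₀ _ (ne_of_gt hba)
    linear_combination h'
  have := hθ.2 (Set.mem_Ici.2 ha) (Set.mem_Ici.2 (by linarith : (0:ℝ) ≤ b)) (ne_of_lt hab)
    hlam0 (by linarith : (0:ℝ) < 1 - lam) (by ring)
  simp only [smul_eq_mul] at this
  rw [← hc] at this
  calc θ c < lam * θ a + (1 - lam) * θ b := this
    _ = θ a + (c - a) * ((θ b - θ a) / (b - a)) := by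
        rw [hlam]
        field_simp
        ring

/-- Lemma A: contraction inequality. -/
lemma lemA {θ : ℝ → ℝ} (hθ : ConvexOn ℝ (Set.Ici 0) θ) {a b y1 y2 v1 v2 c1 c2 : ℝ}
    (ha : 0 ≤ a) (hab : a < b) (hy1 : 0 < y1) (hy2 : 0 < y2)
    (hv1 : 0 < v1) (hv2 : 0 < v2)
    (hc1a : a ≤ c1) (hc1b : c1 ≤ b) (hc2a : a ≤ c2) (hc2b : c2 ≤ b)
    (hwsum : v1 + v2 = y1 + y2) (hcons : v1 * c1 + v2 * c2 = y1 * a + y2 * b) :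
    v1 * θ c1 + v2 * θ c2 ≤ y1 * θ a + y2 * θ b := by
  have hba : (0:ℝ) < b - a := by linarith
  set κ := (θ b - θ a) / (b - a) with hκ
  have h1 := chord_le hθ ha hab hc1a hc1b
  have h2 := chord_le hθ ha hab hc2a hc2b
  have hchain : v1 * θ c1 + v2 * θ c2
      ≤ (v1 + v2) * θ a + κ * (v1 * (c1 - a) + v2 * (c2 - a)) := by
    have e1 : v1 * θ c1 ≤ v1 * (θ a + (c1 - a) * κ) := by
      apply mul_le_mul_of_nonneg_left h1 (le_of_lt hv1)
    have e2 : v2 * θ c2 ≤ v2 * (θ a + (c2 - a) * κ) := by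
      apply mul_le_mul_of_nonneg_left h2 (le_of_lt hv2)
    nlinarith [e1, e2]
  have hident : (v1 + v2) * θ a + κ * (v1 * (c1 - a) + v2 * (c2 - a))
      = y1 * θ a + y2 * θ b := by
    have hv : v1 * (c1 - a) + v2 * (c2 - a) = y2 * (b - a) := by nlinarith
    rw [hv, hwsum, hκ]
    field_simp
    ring
  linarith

/-- Lemma A, strict version (strictness witnessed at `c2`). -/
lemma lemA_strict {θ : ℝ → ℝ} (hθ : StrictConvexOn ℝ (Set.Ici 0) θ)
    {a b y1 y2 v1 v2 c1 c2 : ℝ}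
    (ha : 0 ≤ a) (hab : a < b) (hy1 : 0 < y1) (hy2 : 0 < y2)
    (hv1 : 0 < v1) (hv2 : 0 < v2)
    (hc1a : a ≤ c1) (hc1b : c1 ≤ b) (hc2a : a < c2) (hc2b : c2 < b)
    (hwsum : v1 + v2 = y1 + y2) (hcons : v1 * c1 + v2 * c2 = y1 * a + y2 * b) :
    v1 * θ c1 + v2 * θ c2 < y1 * θ a + y2 * θ b := by
  have hba : (0:ℝ) < b - a := by linarith
  set κ := (θ b - θ a) / (b - a) with hκ
  have h1 := chord_le hθ.convexOn ha hab hc1a hc1b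
  have h2 := chord_lt hθ ha hab hc2a hc2b
  have hchain : v1 * θ c1 + v2 * θ c2
      < (v1 + v2) * θ a + κ * (v1 * (c1 - a) + v2 * (c2 - a)) := by
    have e1 : v1 * θ c1 ≤ v1 * (θ a + (c1 - a) * κ) := by
      apply mul_le_mul_of_nonneg_left h1 (le_of_lt hv1)
    have e2 : v2 * θ c2 < v2 * (θ a + (c2 - a) * κ) := by
      apply mul_lt_mul_of_pos_left h2 hv2
    nlinarith [e1, e2]
  have hident : (v1 + v2) * θ a + κ * (v1 * (c1 - a) + v2 * (c2 - a))
      = y1 * θ a + y2 * θ b := by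
    have hv : v1 * (c1 - a) + v2 * (c2 - a) = y2 * (b - a) := by nlinarith
    rw [hv, hwsum, hκ]
    field_simp
    ring
  linarith

/-- Mixed Lemma A': `w1`-slot carries a constant function `C ≥ θ2 0`; only the
`y`-coordinates move (by `s`), `x1 = 0` stays. -/
lemma lemA_mixed {θ2 : ℝ → ℝ} (hθ2 : ConvexOn ℝ (Set.Ici 0) θ2) {C b y1 y2 s : ℝ}
    (hC : θ2 0 ≤ C) (hb : 0 < b) (hy1 : 0 < y1) (hy2 : 0 < y2)
    (hs0 : 0 ≤ s) (hsy : s < y1) :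
    (y1 - s) * C + (y2 + s) * θ2 (y2 * b / (y2 + s)) ≤ y1 * C + y2 * θ2 b := by
  have hy2s : (0:ℝ) < y2 + s := by linarith
  set b' := y2 * b / (y2 + s) with hb'
  have hb'0 : 0 ≤ b' := by positivity
  have hb'b : b' ≤ b := by
    rw [hb', div_le_iff₀ hy2s]
    nlinarith
  have hch := chord_le hθ2 (le_refl (0:ℝ)) hb hb'0 hb'b
  simp only [sub_zero] at hch
  set κ := (θ2 b - θ2 0) / b with hκ
  have hbne : b ≠ 0 := ne_of_gt hb
  have hκb : b * κ = θ2 b - θ2 0 := by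
    rw [hκ]; field_simp
  have hb'e : (y2 + s) * b' = y2 * b := by
    rw [hb']; field_simp
  have hmul : (y2 + s) * θ2 b' ≤ (y2 + s) * θ2 0 + y2 * (θ2 b - θ2 0) := by
    have h1 : (y2 + s) * θ2 b' ≤ (y2 + s) * (θ2 0 + b' * κ) :=
      mul_le_mul_of_nonneg_left hch (le_of_lt hy2s)
    have h2 : (y2 + s) * (θ2 0 + b' * κ) = (y2 + s) * θ2 0 + y2 * (θ2 b - θ2 0) := by
      have : (y2 + s) * (b' * κ) = y2 * (b * κ) := by
        rw [show (y2 + s) * (b' * κ) = ((y2 + s) * b') * κ from by ring, hb'e]; ring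
      rw [show y2 * (θ2 b - θ2 0) = y2 * (b * κ) from by rw [hκb]]
      linarith [this]
    linarith
  nlinarith

lemma lemA_mixed_strict {θ2 : ℝ → ℝ} (hθ2 : StrictConvexOn ℝ (Set.Ici 0) θ2)
    {C b y1 y2 s : ℝ}
    (hC : θ2 0 ≤ C) (hb : 0 < b) (hy1 : 0 < y1) (hy2 : 0 < y2)
    (hs0 : 0 < s) (hsy : s < y1) :
    (y1 - s) * C + (y2 + s) * θ2 (y2 * b / (y2 + s)) < y1 * C + y2 * θ2 b := by
  have hy2s : (0:ℝ) < y2 + s := by linarith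
  set b' := y2 * b / (y2 + s) with hb'
  have hb'0 : 0 < b' := by positivity
  have hb'b : b' < b := by
    rw [hb', div_lt_iff₀ hy2s]
    nlinarith
  have hch := chord_lt hθ2 (le_refl (0:ℝ)) hb hb'0 hb'b
  simp only [sub_zero] at hch
  set κ := (θ2 b - θ2 0) / b with hκ
  have hbne : b ≠ 0 := ne_of_gt hb
  have hκb : b * κ = θ2 b - θ2 0 := by
    rw [hκ]; field_simp
  have hb'e : (y2 + s) * b' = y2 * b := by
    rw [hb']; field_simp
  have hmul : (y2 + s) * θ2 b' < (y2 + s) * θ2 0 + y2 * (θ2 b - θ2 0) := by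
    have h1 : (y2 + s) * θ2 b' < (y2 + s) * (θ2 0 + b' * κ) :=
      mul_lt_mul_of_pos_left hch hy2s
    have h2 : (y2 + s) * (θ2 0 + b' * κ) = (y2 + s) * θ2 0 + y2 * (θ2 b - θ2 0) := by
      have : (y2 + s) * (b' * κ) = y2 * (b * κ) := by
        rw [show (y2 + s) * (b' * κ) = ((y2 + s) * b') * κ from by ring, hb'e]; ring
      rw [show y2 * (θ2 b - θ2 0) = y2 * (b * κ) from by rw [hκb]]
      linarith [this]
    linarith
  nlinarith

/-- number of inversions of a real sequence on `Fin n` -/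
noncomputable def invcount {n : ℕ} (r : Fin n → ℝ) : ℕ :=
  (Finset.univ.filter (fun ij : Fin n × Fin n => ij.1 < ij.2 ∧ r ij.1 < r ij.2)).card

lemma swap_lt_of_ne {n : ℕ} {k k1 : Fin n} (hk : (k1 : ℕ) = (k : ℕ) + 1)
    {i j : Fin n} (hij : i < j) (hne : ¬(i = k ∧ j = k1)) :
    Equiv.swap k k1 i < Equiv.swap k k1 j := by
  have hek : Equiv.swap k k1 k = k1 := Equiv.swap_apply_left k k1
  have hek1 : Equiv.swap k k1 k1 = k := Equiv.swap_apply_right k k1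
  by_cases hik : i = k
  · by_cases hjk1 : j = k1
    · exact absurd ⟨hik, hjk1⟩ hne
    · have hei : Equiv.swap k k1 i = k1 := by rw [hik]; exact hek
      by_cases hjk : j = k
      · rw [hik, hjk] at hij; exact absurd hij (lt_irrefl _)
      · have hej : Equiv.swap k k1 j = j := Equiv.swap_apply_of_ne_of_ne hjk hjk1
        rw [hei, hej, Fin.lt_def]
        rw [hik, Fin.lt_def] at hij
        have : (j : ℕ) ≠ (k1 : ℕ) := fun h => hjk1 (Fin.ext h)
        omega
  · by_cases hik1 : i = k1
    · have hei : Equiv.swap k k1 i = k := by rw [hik1]; exact hek1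
      have hjk1 : j ≠ k1 := by intro h; rw [hik1, h] at hij; exact absurd hij (lt_irrefl _)
      have hjk : j ≠ k := by
        intro h; rw [hik1, h, Fin.lt_def] at hij; omega
      have hej : Equiv.swap k k1 j = j := Equiv.swap_apply_of_ne_of_ne hjk hjk1
      rw [hei, hej, Fin.lt_def]
      rw [hik1, Fin.lt_def] at hij
      omega
    · have hei : Equiv.swap k k1 i = i := Equiv.swap_apply_of_ne_of_ne hik hik1
      by_cases hjk : j = k
      · have hej : Equiv.swap k k1 j = k1 := by rw [hjk]; exact hek
        rw [hei, hej, Fin.lt_def]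
        rw [hjk, Fin.lt_def] at hij
        omega
      · by_cases hjk1 : j = k1
        · have hej : Equiv.swap k k1 j = k := by rw [hjk1]; exact hek1
          rw [hei, hej, Fin.lt_def]
          rw [hjk1, Fin.lt_def] at hij
          have : (i : ℕ) ≠ (k : ℕ) := fun h => hik (Fin.ext h)
          omega
        · have hej : Equiv.swap k k1 j = j := Equiv.swap_apply_of_ne_of_ne hjk hjk1
          rw [hei, hej]
          exact hij

lemma invcount_swap {n : ℕ} (r : Fin n → ℝ) (k k1 : Fin n)
    (hk : (k1 : ℕ) = (k : ℕ) + 1) (hr : r k < r k1) :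
    invcount (r ∘ Equiv.swap k k1) + 1 = invcount r := by
  classical
  set e := Equiv.swap k k1 with he
  have hek : e k = k1 := Equiv.swap_apply_left k k1
  have hek1 : e k1 = k := Equiv.swap_apply_right k k1
  have hkk1lt : k < k1 := by rw [Fin.lt_def]; omega
  set A := Finset.univ.filter (fun ij : Fin n × Fin n => ij.1 < ij.2 ∧ (r ∘ e) ij.1 < (r ∘ e) ij.2) with hA
  set B := Finset.univ.filter (fun ij : Fin n × Fin n => ij.1 < ij.2 ∧ r ij.1 < r ij.2) with hB
  have hmem : (k, k1) ∈ B := by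
    simp only [hB, Finset.mem_filter, Finset.mem_univ, true_and]
    exact ⟨hkk1lt, hr⟩
  have hcard : A.card = (B.erase (k, k1)).card := by
    apply Finset.card_bij (fun ij _ => (e ij.1, e ij.2))
    · rintro ⟨i, j⟩ hij
      simp only [hA, Finset.mem_filter, Finset.mem_univ, true_and] at hij
      obtain ⟨hlt, hrlt⟩ := hij
      have hne : ¬(i = k ∧ j = k1) := by
        rintro ⟨rfl, rfl⟩
        simp only [Function.comp_apply, hek, hek1] at hrlt
        linarith
      refine Finset.mem_erase.2 ⟨?_, ?_⟩
      · intro hcontra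
        have h1 : e i = k := congrArg Prod.fst hcontra
        have h2 : e j = k1 := congrArg Prod.snd hcontra
        have hi1 : i = k1 := by
          have := congrArg e h1
          rwa [Equiv.swap_apply_self, hek] at this
        have hj1 : j = k := by
          have := congrArg e h2
          rwa [Equiv.swap_apply_self, hek1] at this
        rw [hi1, hj1] at hlt
        exact absurd hlt (not_lt.2 (le_of_lt hkk1lt))
      · simp only [hB, Finset.mem_filter, Finset.mem_univ, true_and]
        exact ⟨swap_lt_of_ne hk hlt hne, hrlt⟩
    · rintro ⟨i1, j1⟩ _ ⟨i2, j2⟩ _ hmap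
      have h1 : e i1 = e i2 := congrArg Prod.fst hmap
      have h2 : e j1 = e j2 := congrArg Prod.snd hmap
      exact Prod.ext (e.injective h1) (e.injective h2)
    · rintro ⟨a, b⟩ hab
      rw [Finset.mem_erase] at hab
      obtain ⟨hne', hab⟩ := hab
      simp only [hB, Finset.mem_filter, Finset.mem_univ, true_and] at hab
      obtain ⟨hlt, hrlt⟩ := hab
      have hne : ¬(a = k ∧ b = k1) := by
        rintro ⟨rfl, rfl⟩; exact hne' rfl
      refine ⟨(e a, e b), ?_, ?_⟩
      · simp only [hA, he, Finset.mem_filter, Finset.mem_univ, true_and, Function.comp_apply,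
          Equiv.swap_apply_self]
        exact ⟨swap_lt_of_ne hk hlt hne, hrlt⟩
      · simp [he, Equiv.swap_apply_self]
  have hcard2 : (B.erase (k, k1)).card + 1 = B.card := by
    rw [Finset.card_erase_of_mem hmem]
    have : 0 < B.card := Finset.card_pos.2 ⟨(k, k1), hmem⟩
    omega
  show A.card + 1 = B.card
  rw [hcard]
  exact hcard2

lemma antitone_of_adj {n : ℕ} {r : Fin n → ℝ}
    (hadj : ∀ m : ℕ, ∀ h1 : m + 1 < n, r ⟨m + 1, h1⟩ ≤ r ⟨m, by omega⟩) :
    ∀ i j : Fin n, i ≤ j → r j ≤ r i := by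
  have key : ∀ d : ℕ, ∀ i j : Fin n, (j : ℕ) = (i : ℕ) + d → r j ≤ r i := by
    intro d
    induction d with
    | zero =>
      intro i j hij
      have : i = j := Fin.ext (by omega)
      rw [this]
    | succ d ih =>
      intro i j hij
      have hd : (i : ℕ) + d < n := by have := j.isLt; omega
      set j' : Fin n := ⟨(i : ℕ) + d, hd⟩ with hj'
      have h1 : r j ≤ r j' := by
        have := hadj ((i : ℕ) + d) (by have := j.isLt; omega)
        have hje : j = ⟨(i:ℕ) + d + 1, by have := j.isLt; omega⟩ :=
          Fin.ext (by simp only [Fin.val_mk]; omega)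
        rw [hje]
        exact this
      exact le_trans h1 (ih i j' rfl)
  intro i j hij
  exact key ((j : ℕ) - (i : ℕ)) i j (by rw [Fin.le_def] at hij; omega)

lemma exists_adj_inversion {n : ℕ} {r : Fin n → ℝ}
    (h : ∃ i j : Fin n, i < j ∧ r i < r j) :
    ∃ (m : ℕ) (h1 : m + 1 < n), r ⟨m, by omega⟩ < r ⟨m + 1, h1⟩ := by
  by_contra hc
  push_neg at hc
  obtain ⟨i, j, hij, hrij⟩ := h
  have := antitone_of_adj (r := r) (fun m h1 => hc m h1) i j (le_of_lt hij)
  linarith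

lemma invcount_zero_iff {n : ℕ} (r : Fin n → ℝ) :
    invcount r = 0 ↔ ∀ i j : Fin n, i < j → ¬ r i < r j := by
  unfold invcount
  rw [Finset.card_eq_zero, Finset.filter_eq_empty_iff]
  constructor
  · intro h i j hij hr
    exact h (Finset.mem_univ (i, j)) ⟨hij, hr⟩
  · rintro h ij _ ⟨h1, h2⟩
    exact h ij.1 ij.2 h1 h2


-- ===================== THE SWAP ENGINE =====================

lemma swp_ne_self (σ : Perms V) {w1 w2 : V} (hadj : (σ w2 : ℕ) = (σ w1 : ℕ) + 1) :
    swp σ w1 w2 ≠ σ := by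
  intro h
  have : swp σ w1 w2 w1 = σ w1 := by rw [h]
  rw [swp_apply_w1] at this
  have := congrArg Fin.val this
  omega

lemma symm_swap_comm (σ : Perms V) (w1 w2 : V) (i : Fin (Fintype.card V)) :
    (Equiv.swap w1 w2) (σ.symm i) = σ.symm ((Equiv.swap (σ w1) (σ w2)) i) := by
  by_cases h1 : i = σ w1
  · subst h1; simp
  · by_cases h2 : i = σ w2
    · subst h2; simp
    · have e1 : σ.symm i ≠ w1 := by
        intro h; rw [← h] at h1; simp at h1
      have e2 : σ.symm i ≠ w2 := by
        intro h; rw [← h] at h2; simp at h2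
      rw [Equiv.swap_apply_of_ne_of_ne e1 e2, Equiv.swap_apply_of_ne_of_ne h1 h2]

lemma engine (f g : Finset V → ℝ) (hdm : DualModular f g)
    (p0 q0 : Perms V → ℝ) (hp0 : IsDist p0) (hq0 : IsDist q0)
    (HD : ∀ p q : Perms V → ℝ, IsDist p → IsDist q →
      distVal f p = distVal f p0 → distVal g q = distVal g q0 → (p0 = q0 → p = q) →
      ∀ σ : Perms V, ∀ w1 w2 : V, (σ w2 : ℕ) = (σ w1 : ℕ) + 1 →
      solDensity f g p0 q0 w1 < solDensity f g p0 q0 w2 →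
      (0 < p σ ∨ 0 < q σ) →
      (0 < p σ → permVal f (swp σ w1 w2) w2 = permVal f σ w2) ∧
      (0 < q σ → permVal g (swp σ w1 w2) w2 = permVal g σ w2)) :
    ∃ ph qh : Perms V → ℝ, IsDist ph ∧ IsDist qh ∧
      distVal f ph = distVal f p0 ∧ distVal g qh = distVal g q0 ∧
      LocallyMaximinSol f g ph qh ∧ (p0 = q0 → ph = qh) := by
  classical
  set ρ : V → ℝ := solDensity f g p0 q0 with hρdef
  -- the inversion count of a permutation
  set ic : Perms V → ℕ := fun σ => invcount (fun i => ρ (σ.symm i)) with hic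
  -- main induction
  suffices key : ∀ N : ℕ, ∀ p q : Perms V → ℝ, IsDist p → IsDist q →
      distVal f p = distVal f p0 → distVal g q = distVal g q0 → (p0 = q0 → p = q) →
      (∑ σ ∈ (Finset.univ.filter (fun σ => 0 < p σ)) ∪ (Finset.univ.filter (fun σ => 0 < q σ)), ic σ) ≤ N →
      ∃ ph qh : Perms V → ℝ, IsDist ph ∧ IsDist qh ∧
        distVal f ph = distVal f p0 ∧ distVal g qh = distVal g q0 ∧
        LocallyMaximinSol f g ph qh ∧ (p0 = q0 → ph = qh) by
    exact key _ p0 q0 hp0 hq0 rfl rfl (fun h => h) (le_refl _)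
  intro N
  induction N with
  | zero =>
    intro p q hp hq hx hy hdiag hμ
    refine ⟨p, q, hp, hq, hx, hy, ?_, hdiag⟩
    intro u v huv σ hσ
    have hρuv : ρ v < ρ u := by
      have e1 : solDensity f g p q v = ρ v := by
        rw [hρdef]; unfold solDensity; rw [hx, hy]
      have e2 : solDensity f g p q u = ρ u := by
        rw [hρdef]; unfold solDensity; rw [hx, hy]
      rwa [e1, e2] at huv
    have huvne : u ≠ v := by
      intro h; rw [h] at hρuv; exact lt_irrefl _ hρuv
    have hσmem : σ ∈ (Finset.univ.filter (fun σ => 0 < p σ)) ∪ (Finset.univ.filter (fun σ => 0 < q σ)) := by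
      rcases hσ with h | h
      · exact Finset.mem_union_left _ (Finset.mem_filter.2 ⟨Finset.mem_univ _, h⟩)
      · exact Finset.mem_union_right _ (Finset.mem_filter.2 ⟨Finset.mem_univ _, h⟩)
    have hic0 : ic σ = 0 := by
      have := Finset.single_le_sum (f := ic) (fun τ _ => Nat.zero_le _) hσmem
      omega
    rw [hic, invcount_zero_iff] at hic0
    by_contra hc
    have hσne : σ u ≠ σ v := fun h => huvne (σ.injective h)
    have hvu : σ v < σ u := by
      rcases lt_or_gt_of_ne hσne with h | h
      · exact absurd h hc
      · exact h
    exact hic0 (σ v) (σ u) hvu (by simpa using hρuv)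
  | succ N ih =>
    intro p q hp hq hx hy hdiag hμ
    set S := (Finset.univ.filter (fun σ => 0 < p σ)) ∪ (Finset.univ.filter (fun σ => 0 < q σ)) with hS
    by_cases hbad : ∀ σ ∈ S, ic σ = 0
    · -- already locally maximin (same as base case, measure 0)
      apply ih p q hp hq hx hy hdiag
      have h0 : ∑ σ ∈ S, ic σ = 0 := Finset.sum_eq_zero hbad
      rw [hS] at h0
      omega
    · push_neg at hbad
      obtain ⟨σ0, hσ0S, hσ0ne⟩ := hbad
      have hσ0supp : 0 < p σ0 ∨ 0 < q σ0 := by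
        rcases Finset.mem_union.1 hσ0S with h | h
        · exact Or.inl (Finset.mem_filter.1 h).2
        · exact Or.inr (Finset.mem_filter.1 h).2
      -- find an adjacent inversion in σ0
      set r : Fin (Fintype.card V) → ℝ := fun i => ρ (σ0.symm i) with hr
      have hinv : ∃ i j : Fin (Fintype.card V), i < j ∧ r i < r j := by
        by_contra hcon
        push_neg at hcon
        apply hσ0ne
        rw [hic, invcount_zero_iff]
        intro i j hij
        exact not_lt.2 (hcon i j hij)
      obtain ⟨m, h1, hradj⟩ := exists_adj_inversion hinv
      set k : Fin (Fintype.card V) := ⟨m, by omega⟩ with hk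
      set k1 : Fin (Fintype.card V) := ⟨m + 1, h1⟩ with hk1
      set w1 := σ0.symm k with hw1
      set w2 := σ0.symm k1 with hw2
      have hadj : (σ0 w2 : ℕ) = (σ0 w1 : ℕ) + 1 := by
        rw [hw1, hw2]; simp [hk, hk1]
      have hρ12 : solDensity f g p0 q0 w1 < solDensity f g p0 q0 w2 := hradj
      obtain ⟨hfeq, hgeq⟩ := HD p q hp hq hx hy hdiag σ0 w1 w2 hadj hρ12 hσ0supp
      set σ1 := swp σ0 w1 w2 with hσ1
      have hne10 : σ0 ≠ σ1 := (swp_ne_self σ0 hadj).symm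
      -- the moved distributions
      set p' := if h : 0 < p σ0 then moveD p σ0 σ1 (p σ0) else p with hp'
      set q' := if h : 0 < q σ0 then moveD q σ0 σ1 (q σ0) else q with hq'
      have hp'dist : IsDist p' := by
        rw [hp']
        split_ifs with h
        · exact moveD_isDist hp hne10 (le_of_lt h) (le_refl _)
        · exact hp
      have hq'dist : IsDist q' := by
        rw [hq']
        split_ifs with h
        · exact moveD_isDist hq hne10 (le_of_lt h) (le_refl _)
        · exact hq
      -- permVal differences vanish
      have hfzero : 0 < p σ0 → ∀ u, permVal f σ1 u - permVal f σ0 u = 0 := by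
        intro hpσ u
        by_cases hu1 : u = w1
        · have hsum := permVal_swp_sum σ0 w1 w2 hadj f
          have := hfeq hpσ
          rw [hu1, hσ1]
          linarith [hsum, this]
        · by_cases hu2 : u = w2
          · rw [hu2, hσ1, hfeq hpσ]; ring
          · rw [hσ1, permVal_swp_other σ0 w1 w2 hadj f hu1 hu2]; ring
      have hgzero : 0 < q σ0 → ∀ u, permVal g σ1 u - permVal g σ0 u = 0 := by
        intro hqσ u
        by_cases hu1 : u = w1
        · have hsum := permVal_swp_sum σ0 w1 w2 hadj g
          have := hgeq hqσ
          rw [hu1, hσ1]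
          linarith [hsum, this]
        · by_cases hu2 : u = w2
          · rw [hu2, hσ1, hgeq hqσ]; ring
          · rw [hσ1, permVal_swp_other σ0 w1 w2 hadj g hu1 hu2]; ring
      have hx' : distVal f p' = distVal f p0 := by
        rw [← hx]
        funext u
        rw [hp']
        split_ifs with h
        · rw [moveD_distVal, hfzero h u]; ring
        · rfl
      have hy' : distVal g q' = distVal g q0 := by
        rw [← hy]
        funext u
        rw [hq']
        split_ifs with h
        · rw [moveD_distVal, hgzero h u]; ring
        · rfl
      have hdiag' : p0 = q0 → p' = q' := by
        intro h00
        have hpq : p = q := hdiag h00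
        rw [hp', hq', hpq]
      -- support inclusion
      have hsupp' : (Finset.univ.filter (fun σ => 0 < p' σ)) ∪ (Finset.univ.filter (fun σ => 0 < q' σ))
          ⊆ insert σ1 (S.erase σ0) := by
        intro τ hτ
        have hτsupp : 0 < p' τ ∨ 0 < q' τ := by
          rcases Finset.mem_union.1 hτ with h | h
          · exact Or.inl (Finset.mem_filter.1 h).2
          · exact Or.inr (Finset.mem_filter.1 h).2
        by_cases hτσ1 : τ = σ1
        · exact Finset.mem_insert.2 (Or.inl hτσ1)
        · apply Finset.mem_insert.2
          right
          have hτσ0 : τ ≠ σ0 ∧ (0 < p τ ∨ 0 < q τ) := by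
            rcases hτsupp with h | h
            · rw [hp'] at h
              split_ifs at h with hcase
              · unfold moveD at h
                rw [if_neg hτσ1] at h
                by_cases hτ0 : τ = σ0
                · rw [if_pos hτ0, hτ0] at h; simp at h
                · rw [if_neg hτ0] at h
                  simp only [add_zero, sub_zero] at h
                  exact ⟨hτ0, Or.inl h⟩
              · constructor
                · intro hτ0; rw [hτ0] at h; exact hcase h
                · exact Or.inl h
            · rw [hq'] at h
              split_ifs at h with hcase
              · unfold moveD at h
                rw [if_neg hτσ1] at h
                by_cases hτ0 : τ = σ0
                · rw [if_pos hτ0, hτ0] at h; simp at h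
                · rw [if_neg hτ0] at h
                  simp only [add_zero, sub_zero] at h
                  exact ⟨hτ0, Or.inr h⟩
              · constructor
                · intro hτ0; rw [hτ0] at h; exact hcase h
                · exact Or.inr h
          refine Finset.mem_erase.2 ⟨hτσ0.1, ?_⟩
          rw [hS]
          rcases hτσ0.2 with h | h
          · exact Finset.mem_union_left _ (Finset.mem_filter.2 ⟨Finset.mem_univ _, h⟩)
          · exact Finset.mem_union_right _ (Finset.mem_filter.2 ⟨Finset.mem_univ _, h⟩)
      -- inversion count decreases
      have hicσ1 : ic σ1 + 1 = ic σ0 := by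
        have hcomp : (fun i => ρ (σ1.symm i)) = (fun i => r ((Equiv.swap (σ0 w1) (σ0 w2)) i)) := by
          funext i
          rw [hσ1, swp_symm_eq]
          simp only [Equiv.trans_apply]
          rw [symm_swap_comm σ0 w1 w2 i]
        have hkk : σ0 w1 = k := by rw [hw1]; simp
        have hkk1 : σ0 w2 = k1 := by rw [hw2]; simp
        have heq1 : ic σ1 = invcount (fun i => r ((Equiv.swap k k1) i)) := by
          show invcount (fun i => ρ (σ1.symm i)) = _
          rw [hcomp, hkk, hkk1]
        have heq2 : ic σ0 = invcount r := rfl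
        rw [heq1, heq2]
        exact invcount_swap r k k1 (by simp [hk, hk1]) hradj
      have hicσ0pos : 1 ≤ ic σ0 := by omega
      -- measure decreases
      have hμ' : ∑ σ ∈ (Finset.univ.filter (fun σ => 0 < p' σ)) ∪ (Finset.univ.filter (fun σ => 0 < q' σ)), ic σ ≤ N := by
        have hstep : ∑ σ ∈ (Finset.univ.filter (fun σ => 0 < p' σ)) ∪ (Finset.univ.filter (fun σ => 0 < q' σ)), ic σ
            ≤ ∑ σ ∈ insert σ1 (S.erase σ0), ic σ :=
          Finset.sum_le_sum_of_subset hsupp'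
        have herase : ∑ σ ∈ S.erase σ0, ic σ + ic σ0 = ∑ σ ∈ S, ic σ :=
          Finset.sum_erase_add S ic hσ0S
        by_cases hσ1mem : σ1 ∈ S.erase σ0
        · rw [Finset.insert_eq_self.2 hσ1mem] at hstep
          omega
        · rw [Finset.sum_insert hσ1mem] at hstep
          omega
      exact ih p' q' hp'dist hq'dist hx' hy' hdiag' hμ'

-- ===================== LEMMA Z =====================

lemma supermod_marginal_mono {f : Finset V → ℝ} (hf : Supermodular f) {A B : Finset V}
    (hAB : A ⊆ B) {u : V} (hu : u ∉ B) :
    f (insert u A) - f A ≤ f (insert u B) - f B := by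
  have hkey := hf (insert u A) B
  have hcap : insert u A ∩ B = A := by
    ext w
    simp only [Finset.mem_inter, Finset.mem_insert]
    constructor
    · rintro ⟨h1 | h1, h2⟩
      · rw [h1] at h2; exact absurd h2 hu
      · exact h1
    · intro hw; exact ⟨Or.inr hw, hAB hw⟩
  have hcup : insert u A ∪ B = insert u B := by
    ext w
    simp only [Finset.mem_union, Finset.mem_insert]
    constructor
    · rintro ((h | h) | h) <;> tauto
    · rintro (h | h)
      · exact Or.inl (Or.inl h)
      · exact Or.inr h
  rw [hcap, hcup] at hkey
  linarith

lemma maximin_zero_null (f g : Finset V → ℝ) (hdm : DualModular f g)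
    {p q : Perms V → ℝ} (hp : IsDist p) (hq : IsDist q)
    (hmm : LocallyMaximinSol f g p q) {u : V} (hu : distVal f p u = 0) :
    ∀ σ0 : Perms V, permVal f σ0 u = 0 := by
  classical
  intro σ0
  by_contra hne
  have hposσ0 : 0 < permVal f σ0 u :=
    lt_of_le_of_ne (permVal_nonneg hdm.f_mono σ0 u) (Ne.symm hne)
  set x : V → ℝ := distVal f p with hxdef
  set y : V → ℝ := distVal g q with hydef
  have hy : ∀ v, 0 < y v := fun v => distVal_pos hdm.g_strictMono hq v
  have hxn : ∀ v, 0 ≤ x v := fun v => distVal_nonneg hdm.f_mono hp v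
  set W : Finset V := Finset.univ.filter (fun v => x v ≠ 0) with hW
  have hmemW : ∀ v, v ∈ W ↔ 0 < x v := by
    intro v
    rw [hW]
    simp only [Finset.mem_filter, Finset.mem_univ, true_and]
    constructor
    · intro h; exact lt_of_le_of_ne (hxn v) (Ne.symm h)
    · intro h; exact ne_of_gt h
  have huW : u ∉ W := by
    simp only [hmemW u, hu]
    exact lt_irrefl 0
  -- W is an initial segment of every supported permutation
  have hfront : ∀ σ, 0 < p σ ∨ 0 < q σ → ∀ w ∈ W, ∀ v, v ∉ W → σ w < σ v := by
    intro σ hσ w hw v hv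
    apply hmm w v _ σ hσ
    unfold solDensity
    rw [← hxdef, ← hydef]
    have hxv : x v = 0 := by
      by_contra hc
      exact hv ((hmemW v).2 (lt_of_le_of_ne (hxn v) (Ne.symm hc)))
    rw [hxv]
    rw [zero_div]
    exact div_pos ((hmemW w).1 hw) (hy w)
  have hsumW : ∀ σ, 0 < p σ ∨ 0 < q σ → ∑ w ∈ W, permVal f σ w = f W := by
    intro σ hσ
    have hseg := initseg_of_front (σ := σ) (W := W) (hfront σ hσ)
    rw [hseg]
    exact sum_permVal_initseg hdm.f_empty σ W.card
  -- total mass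
  have htotal : ∑ v, x v = f Finset.univ := by
    rw [hxdef]
    unfold distVal
    rw [Finset.sum_comm]
    have : ∀ σ : Perms V, ∑ v, p σ * permVal f σ v = p σ * f Finset.univ := by
      intro σ
      rw [← Finset.mul_sum, sum_permVal_univ hdm.f_empty]
    rw [Finset.sum_congr rfl (fun σ _ => this σ), ← Finset.sum_mul, hp.2, one_mul]
  have hWmass : ∑ v ∈ W, x v = f W := by
    rw [hxdef]
    unfold distVal
    rw [Finset.sum_comm]
    have hterm : ∀ σ : Perms V, ∑ v ∈ W, p σ * permVal f σ v = p σ * f W := by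
      intro σ
      rw [← Finset.mul_sum]
      by_cases hσ : 0 < p σ
      · rw [hsumW σ (Or.inl hσ)]
      · have : p σ = 0 := le_antisymm (not_lt.1 hσ) (hp.1 σ)
        rw [this, zero_mul, zero_mul]
    rw [Finset.sum_congr rfl (fun σ _ => hterm σ), ← Finset.sum_mul, hp.2, one_mul]
  have hrest : ∑ v ∈ Finset.univ \ W, x v = 0 := by
    apply Finset.sum_eq_zero
    intro v hv
    rw [Finset.mem_sdiff] at hv
    by_contra hc
    exact hv.2 ((hmemW v).2 (lt_of_le_of_ne (hxn v) (Ne.symm hc)))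
  have hfWuniv : f W = f Finset.univ := by
    have := Finset.sum_sdiff (Finset.subset_univ W) (f := x)
    rw [hrest, hWmass, htotal] at this
    linarith
  -- contradiction via supermodularity
  have hWsub : W ⊆ Finset.univ.erase u := by
    intro w hw
    refine Finset.mem_erase.2 ⟨?_, Finset.mem_univ _⟩
    intro h; rw [h] at hw; exact huW hw
  have hbound : permVal f σ0 u ≤ f Finset.univ - f (Finset.univ.erase u) := by
    have := supermod_marginal_mono hdm.f_supermodular
      (Finset.subset_erase.2 ⟨Finset.subset_univ _, not_mem_pfx σ0 u⟩)
      (Finset.notMem_erase u Finset.univ)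
    rw [Finset.insert_erase (Finset.mem_univ u)] at this
    exact this
  have hmono : f W ≤ f (Finset.univ.erase u) := hdm.f_mono _ _ hWsub
  rw [hfWuniv] at hmono
  linarith

-- ===================== TWO-SLOT LEMMAS =====================

lemma twoSlot {th : ℝ → ℝ} (hth : ConvexOn ℝ (Set.Ici 0) th)
    {x1 y1 x2 y2 sf sg : ℝ} (hx1 : 0 ≤ x1) (hy1 : 0 < y1) (hy2 : 0 < y2)
    (hab : x1 / y1 < x2 / y2) (hsf : 0 ≤ sf) (hsg : 0 ≤ sg)
    (hbd1 : sf + (x2 / y2) * sg ≤ y1 * (x2 / y2 - x1 / y1) / 2)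
    (hbd2 : sf + (x1 / y1) * sg ≤ y2 * (x2 / y2 - x1 / y1) / 2)
    (hbd3 : sg ≤ y1 / 2) :
    (y1 - sg) * th ((x1 + sf) / (y1 - sg)) + (y2 + sg) * th ((x2 - sf) / (y2 + sg))
      ≤ y1 * th (x1 / y1) + y2 * th (x2 / y2) := by
  set a := x1 / y1 with ha'
  set b := x2 / y2 with hb'
  have ha : 0 ≤ a := div_nonneg hx1 (le_of_lt hy1)
  have hba : 0 < b - a := by linarith
  have hx1e : x1 = y1 * a := by rw [ha']; field_simp
  have hx2e : x2 = y2 * b := by rw [hb']; field_simp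
  have hv1 : 0 < y1 - sg := by linarith
  have hv2 : 0 < y2 + sg := by linarith
  have hc1a : a ≤ (x1 + sf) / (y1 - sg) := by
    rw [le_div_iff₀ hv1]; nlinarith
  have hc1b : (x1 + sf) / (y1 - sg) ≤ b := by
    rw [div_le_iff₀ hv1]; nlinarith
  have hc2a : a ≤ (x2 - sf) / (y2 + sg) := by
    rw [le_div_iff₀ hv2]; nlinarith
  have hc2b : (x2 - sf) / (y2 + sg) ≤ b := by
    rw [div_le_iff₀ hv2]; nlinarith
  apply lemA hth ha hab hy1 hy2 hv1 hv2 hc1a hc1b hc2a hc2b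
  · ring
  · field_simp
    nlinarith

lemma twoSlot_strict {th : ℝ → ℝ} (hth : StrictConvexOn ℝ (Set.Ici 0) th)
    {x1 y1 x2 y2 sf sg : ℝ} (hx1 : 0 ≤ x1) (hy1 : 0 < y1) (hy2 : 0 < y2)
    (hab : x1 / y1 < x2 / y2) (hsf : 0 ≤ sf) (hsg : 0 ≤ sg)
    (hbd1 : sf + (x2 / y2) * sg ≤ y1 * (x2 / y2 - x1 / y1) / 2)
    (hbd2 : sf + (x1 / y1) * sg ≤ y2 * (x2 / y2 - x1 / y1) / 2)
    (hbd3 : sg ≤ y1 / 2) (hpos : 0 < sf ∨ 0 < sg) :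
    (y1 - sg) * th ((x1 + sf) / (y1 - sg)) + (y2 + sg) * th ((x2 - sf) / (y2 + sg))
      < y1 * th (x1 / y1) + y2 * th (x2 / y2) := by
  set a := x1 / y1 with ha'
  set b := x2 / y2 with hb'
  have ha : 0 ≤ a := div_nonneg hx1 (le_of_lt hy1)
  have hba : 0 < b - a := by linarith
  have hb0 : 0 < b := by linarith
  have hx1e : x1 = y1 * a := by rw [ha']; field_simp
  have hx2e : x2 = y2 * b := by rw [hb']; field_simp
  have hv1 : 0 < y1 - sg := by linarith
  have hv2 : 0 < y2 + sg := by linarith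
  have hc1a : a ≤ (x1 + sf) / (y1 - sg) := by
    rw [le_div_iff₀ hv1]; nlinarith
  have hc1b : (x1 + sf) / (y1 - sg) ≤ b := by
    rw [div_le_iff₀ hv1]; nlinarith
  have hc2a : a < (x2 - sf) / (y2 + sg) := by
    rw [lt_div_iff₀ hv2]; nlinarith
  have hc2b : (x2 - sf) / (y2 + sg) < b := by
    rw [div_lt_iff₀ hv2]
    rcases hpos with h | h
    · nlinarith
    · nlinarith
  apply lemA_strict hth ha hab hy1 hy2 hv1 hv2 hc1a hc1b hc2a hc2b
  · ring
  · field_simp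
    nlinarith

/-- the generalized objective: elements of `Z` contribute a constant `C` -/
noncomputable def ObjZ (f g : Finset V → ℝ) (Z : Finset V) (C : ℝ) (th : ℝ → ℝ)
    (p q : Perms V → ℝ) : ℝ :=
  ∑ u, distVal g q u * (if u ∈ Z then C else th (distVal f p u / distVal g q u))

-- ===================== DIST-LEVEL MOVE LEMMA =====================

lemma move_obj (f g : Finset V → ℝ) (hdm : DualModular f g) (Z : Finset V)
    (hZ : ∀ u ∈ Z, ∀ τ : Perms V, permVal f τ u = 0)
    {p q : Perms V → ℝ} (hp : IsDist p) (hq : IsDist q)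
    (σ : Perms V) {w1 w2 : V} (hadj : (σ w2 : ℕ) = (σ w1 : ℕ) + 1)
    (hρ : solDensity f g p q w1 < solDensity f g p q w2)
    {tp tq : ℝ} (htp0 : 0 ≤ tp) (htq0 : 0 ≤ tq)
    (hbd1 : tp * (permVal f σ w2 - permVal f (swp σ w1 w2) w2)
        + solDensity f g p q w2 * (tq * (permVal g (swp σ w1 w2) w2 - permVal g σ w2))
        ≤ distVal g q w1 * (solDensity f g p q w2 - solDensity f g p q w1) / 2)
    (hbd2 : tp * (permVal f σ w2 - permVal f (swp σ w1 w2) w2)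
        + solDensity f g p q w1 * (tq * (permVal g (swp σ w1 w2) w2 - permVal g σ w2))
        ≤ distVal g q w2 * (solDensity f g p q w2 - solDensity f g p q w1) / 2)
    (hbd3 : tq * (permVal g (swp σ w1 w2) w2 - permVal g σ w2) ≤ distVal g q w1 / 2) :
    (∀ C : ℝ, ∀ th : ℝ → ℝ, ConvexOn ℝ (Set.Ici 0) th → th 0 ≤ C →
      ObjZ f g Z C th (moveD p σ (swp σ w1 w2) tp) (moveD q σ (swp σ w1 w2) tq)
        ≤ ObjZ f g Z C th p q) ∧
    (∀ C : ℝ, ∀ th : ℝ → ℝ, StrictConvexOn ℝ (Set.Ici 0) th → th 0 ≤ C →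
      (0 < tp * (permVal f σ w2 - permVal f (swp σ w1 w2) w2) ∨
        0 < tq * (permVal g (swp σ w1 w2) w2 - permVal g σ w2)) →
      ObjZ f g Z C th (moveD p σ (swp σ w1 w2) tp) (moveD q σ (swp σ w1 w2) tq)
        < ObjZ f g Z C th p q) := by
  classical
  have hne : w1 ≠ w2 := swap_ne σ w1 w2 hadj
  set σ1 := swp σ w1 w2 with hσ1
  set x : V → ℝ := distVal f p with hx
  set y : V → ℝ := distVal g q with hy
  set Δf : ℝ := permVal f σ w2 - permVal f σ1 w2 with hΔf
  set Δg : ℝ := permVal g σ1 w2 - permVal g σ w2 with hΔg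
  set sf : ℝ := tp * Δf with hsf
  set sg : ℝ := tq * Δg with hsg
  set p' := moveD p σ σ1 tp with hp'
  set q' := moveD q σ σ1 tq with hq'
  have hΔf0 : 0 ≤ Δf := sub_nonneg.2 (permVal_swp_le_f σ w1 w2 hadj hdm.f_supermodular)
  have hΔg0 : 0 ≤ Δg := sub_nonneg.2 (permVal_swp_ge_g σ w1 w2 hadj hdm.g_submodular)
  have hsf0 : 0 ≤ sf := mul_nonneg htp0 hΔf0
  have hsg0 : 0 ≤ sg := mul_nonneg htq0 hΔg0
  have hy1 : 0 < y w1 := distVal_pos hdm.g_strictMono hq w1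
  have hy2 : 0 < y w2 := distVal_pos hdm.g_strictMono hq w2
  have hx1 : 0 ≤ x w1 := distVal_nonneg hdm.f_mono hp w1
  have hx2 : 0 ≤ x w2 := distVal_nonneg hdm.f_mono hp w2
  have hab : x w1 / y w1 < x w2 / y w2 := hρ
  have hsumf := permVal_swp_sum σ w1 w2 hadj f
  have hsumg := permVal_swp_sum σ w1 w2 hadj g
  -- new allocation values
  have hx'w1 : distVal f p' w1 = x w1 + sf := by
    rw [hp', moveD_distVal, hsf, hΔf]
    have : permVal f σ1 w1 - permVal f σ w1 = permVal f σ w2 - permVal f σ1 w2 := by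
      linarith [hsumf]
    rw [this]
  have hx'w2 : distVal f p' w2 = x w2 - sf := by
    rw [hp', moveD_distVal, hsf, hΔf]; ring
  have hy'w1 : distVal g q' w1 = y w1 - sg := by
    rw [hq', moveD_distVal, hsg, hΔg]
    have : permVal g σ1 w1 - permVal g σ w1 = -(permVal g σ1 w2 - permVal g σ w2) := by
      linarith [hsumg]
    rw [this]; ring
  have hy'w2 : distVal g q' w2 = y w2 + sg := by
    rw [hq', moveD_distVal, hsg, hΔg]
  have hx'other : ∀ u, u ≠ w1 → u ≠ w2 → distVal f p' u = x u := by
    intro u h1 h2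
    rw [hp', moveD_distVal, hσ1, permVal_swp_other σ w1 w2 hadj f h1 h2]
    ring
  have hy'other : ∀ u, u ≠ w1 → u ≠ w2 → distVal g q' u = y u := by
    intro u h1 h2
    rw [hq', moveD_distVal, hσ1, permVal_swp_other σ w1 w2 hadj g h1 h2]
    ring
  -- w2 is not in Z
  have hw2Z : w2 ∉ Z := by
    intro hw2
    have hx2z : x w2 = 0 := by
      rw [hx]
      unfold distVal
      apply Finset.sum_eq_zero
      intro τ _
      rw [hZ w2 hw2 τ, mul_zero]
    have : solDensity f g p q w2 = 0 := by
      unfold solDensity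
      rw [← hx, ← hy, hx2z, zero_div]
    rw [this] at hρ
    have : 0 ≤ solDensity f g p q w1 := by
      unfold solDensity
      rw [← hx, ← hy]
      exact div_nonneg hx1 (le_of_lt hy1)
    linarith
  -- Z-case: sf vanishes
  have hZsf : w1 ∈ Z → sf = 0 := by
    intro hw1
    have h1 : permVal f σ w1 = 0 := hZ w1 hw1 σ
    have h2 : permVal f σ1 w1 = 0 := hZ w1 hw1 σ1
    have : Δf = 0 := by rw [hΔf]; linarith [hsumf]
    rw [hsf, this, mul_zero]
  have hZx1 : w1 ∈ Z → x w1 = 0 := by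
    intro hw1
    rw [hx]
    unfold distVal
    apply Finset.sum_eq_zero
    intro τ _
    rw [hZ w1 hw1 τ, mul_zero]
  -- difference formula
  have hdiff : ∀ C : ℝ, ∀ th : ℝ → ℝ,
      ObjZ f g Z C th p' q' - ObjZ f g Z C th p q
      = ((distVal g q' w1 * (if w1 ∈ Z then C else th (distVal f p' w1 / distVal g q' w1))
          + distVal g q' w2 * (if w2 ∈ Z then C else th (distVal f p' w2 / distVal g q' w2)))
        - (y w1 * (if w1 ∈ Z then C else th (x w1 / y w1))
          + y w2 * (if w2 ∈ Z then C else th (x w2 / y w2)))) := by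
    intro C th
    unfold ObjZ
    apply sum_diff_two hne
    intro u h1 h2
    rw [hx'other u h1 h2, hy'other u h1 h2, ← hx, ← hy]
  constructor
  · intro C th hth hC
    have hkey : (y w1 - sg) * (if w1 ∈ Z then C else th ((x w1 + sf) / (y w1 - sg)))
        + (y w2 + sg) * th ((x w2 - sf) / (y w2 + sg))
        ≤ y w1 * (if w1 ∈ Z then C else th (x w1 / y w1)) + y w2 * th (x w2 / y w2) := by
      by_cases hw1 : w1 ∈ Z
      · rw [if_pos hw1, if_pos hw1]
        have hsfz : sf = 0 := hZsf hw1
        have hx2b : x w2 = y w2 * (x w2 / y w2) := by field_simp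
        have hb0 : 0 < x w2 / y w2 := by
          have : 0 ≤ x w1 / y w1 := div_nonneg hx1 (le_of_lt hy1)
          linarith
        have := lemA_mixed hth hC hb0 hy1 hy2 hsg0 (by linarith [hbd3] : sg < y w1)
        rw [hsfz]
        simp only [sub_zero, add_zero]
        calc (y w1 - sg) * C + (y w2 + sg) * th (x w2 / (y w2 + sg))
            = (y w1 - sg) * C + (y w2 + sg) * th (y w2 * (x w2 / y w2) / (y w2 + sg)) := by
              rw [← hx2b]
          _ ≤ y w1 * C + y w2 * th (x w2 / y w2) := this
      · rw [if_neg hw1, if_neg hw1]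
        exact twoSlot hth hx1 hy1 hy2 hab hsf0 hsg0 hbd1 hbd2 hbd3
    have := hdiff C th
    rw [if_neg hw2Z, if_neg hw2Z] at this
    rw [hx'w1, hx'w2, hy'w1, hy'w2] at this
    linarith [hkey, this]
  · intro C th hth hC hpos
    have hposs : 0 < sf ∨ 0 < sg := hpos
    have hkey : (y w1 - sg) * (if w1 ∈ Z then C else th ((x w1 + sf) / (y w1 - sg)))
        + (y w2 + sg) * th ((x w2 - sf) / (y w2 + sg))
        < y w1 * (if w1 ∈ Z then C else th (x w1 / y w1)) + y w2 * th (x w2 / y w2) := by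
      by_cases hw1 : w1 ∈ Z
      · rw [if_pos hw1, if_pos hw1]
        have hsfz : sf = 0 := hZsf hw1
        have hsgpos : 0 < sg := by
          rcases hposs with h | h
          · rw [hsfz] at h; linarith
          · exact h
        have hx2b : x w2 = y w2 * (x w2 / y w2) := by field_simp
        have hb0 : 0 < x w2 / y w2 := by
          have : 0 ≤ x w1 / y w1 := div_nonneg hx1 (le_of_lt hy1)
          linarith
        have := lemA_mixed_strict hth hC hb0 hy1 hy2 hsgpos (by linarith [hbd3] : sg < y w1)
        rw [hsfz]
        simp only [sub_zero, add_zero]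
        calc (y w1 - sg) * C + (y w2 + sg) * th (x w2 / (y w2 + sg))
            = (y w1 - sg) * C + (y w2 + sg) * th (y w2 * (x w2 / y w2) / (y w2 + sg)) := by
              rw [← hx2b]
          _ < y w1 * C + y w2 * th (x w2 / y w2) := this
      · rw [if_neg hw1, if_neg hw1]
        exact twoSlot_strict hth hx1 hy1 hy2 hab hsf0 hsg0 hbd1 hbd2 hbd3 hposs
    have := hdiff C th
    rw [if_neg hw2Z, if_neg hw2Z] at this
    rw [hx'w1, hx'w2, hy'w1, hy'w2] at this
    linarith [hkey, this]

-- ===================== HD PROVIDER =====================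

lemma provider (f g : Finset V → ℝ) (hdm : DualModular f g) (Z : Finset V)
    (hZ : ∀ u ∈ Z, ∀ τ : Perms V, permVal f τ u = 0)
    {CA CB : ℝ} {thA thB : ℝ → ℝ}
    (hthA : ConvexOn ℝ (Set.Ici 0) thA) (hthB : StrictConvexOn ℝ (Set.Ici 0) thB)
    (hCA : thA 0 ≤ CA) (hCB : thB 0 ≤ CB)
    {p q : Perms V → ℝ} (hp : IsDist p) (hq : IsDist q)
    (HLex : ∀ p' q' : Perms V → ℝ, IsDist p' → IsDist q' → (p = q → p' = q') →
      ObjZ f g Z CA thA p' q' ≤ ObjZ f g Z CA thA p q →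
      ObjZ f g Z CB thB p q ≤ ObjZ f g Z CB thB p' q')
    (σ : Perms V) (w1 w2 : V) (hadj : (σ w2 : ℕ) = (σ w1 : ℕ) + 1)
    (hρ : solDensity f g p q w1 < solDensity f g p q w2)
    (hσsupp : 0 < p σ ∨ 0 < q σ) :
    (0 < p σ → permVal f (swp σ w1 w2) w2 = permVal f σ w2) ∧
    (0 < q σ → permVal g (swp σ w1 w2) w2 = permVal g σ w2) := by
  classical
  set σ1 := swp σ w1 w2 with hσ1
  set Δf : ℝ := permVal f σ w2 - permVal f σ1 w2 with hΔf
  set Δg : ℝ := permVal g σ1 w2 - permVal g σ w2 with hΔg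
  have hΔf0 : 0 ≤ Δf := sub_nonneg.2 (permVal_swp_le_f σ w1 w2 hadj hdm.f_supermodular)
  have hΔg0 : 0 ≤ Δg := sub_nonneg.2 (permVal_swp_ge_g σ w1 w2 hadj hdm.g_submodular)
  by_cases hbad : (0 < p σ ∧ 0 < Δf) ∨ (0 < q σ ∧ 0 < Δg)
  · exfalso
    set a := solDensity f g p q w1 with ha
    set b := solDensity f g p q w2 with hb
    set y1 := distVal g q w1 with hy1d
    set y2 := distVal g q w2 with hy2d
    have hy1 : 0 < y1 := distVal_pos hdm.g_strictMono hq w1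
    have hy2 : 0 < y2 := distVal_pos hdm.g_strictMono hq w2
    have ha0 : 0 ≤ a := by
      rw [ha]; unfold solDensity
      exact div_nonneg (distVal_nonneg hdm.f_mono hp w1) (le_of_lt hy1)
    have hba : 0 < b - a := by rw [ha, hb]; linarith [hρ]
    have hb0 : 0 < b := by linarith
    set E := min (y1 * (b - a) / 2) (min (y2 * (b - a) / 2) (y1 / 2)) with hE
    have hE0 : 0 < E := by
      apply lt_min
      · positivity
      · apply lt_min
        · positivity
        · positivity
    set D := Δf + b * Δg + a * Δg + Δg + 1 with hD
    have hD0 : 0 < D := by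
      have : 0 ≤ b * Δg := mul_nonneg (le_of_lt hb0) hΔg0
      have : 0 ≤ a * Δg := mul_nonneg ha0 hΔg0
      rw [hD]; positivity
    set t0 := E / D with ht0
    have ht00 : 0 < t0 := div_pos hE0 hD0
    set tp := min t0 (p σ) with htp
    set tq := min t0 (q σ) with htq
    have htp0 : 0 ≤ tp := le_min (le_of_lt ht00) (hp.1 σ)
    have htq0 : 0 ≤ tq := le_min (le_of_lt ht00) (hq.1 σ)
    have htpσ : tp ≤ p σ := min_le_right _ _
    have htqσ : tq ≤ q σ := min_le_right _ _
    have htpt0 : tp ≤ t0 := min_le_left _ _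
    have htqt0 : tq ≤ t0 := min_le_left _ _
    have ht0D : t0 * D = E := by
      rw [ht0]; field_simp
    -- the three bounds
    have hkey1 : tp * Δf + b * (tq * Δg) ≤ t0 * D := by
      have h1 : tp * Δf ≤ t0 * Δf := mul_le_mul_of_nonneg_right htpt0 hΔf0
      have h2 : b * (tq * Δg) ≤ b * (t0 * Δg) :=
        mul_le_mul_of_nonneg_left (mul_le_mul_of_nonneg_right htqt0 hΔg0) (le_of_lt hb0)
      have h3 : 0 ≤ t0 * (a * Δg) := mul_nonneg (le_of_lt ht00) (mul_nonneg ha0 hΔg0)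
      have h4 : 0 ≤ t0 * Δg := mul_nonneg (le_of_lt ht00) hΔg0
      rw [hD]; nlinarith
    have hbd1 : tp * Δf + b * (tq * Δg) ≤ y1 * (b - a) / 2 := by
      have := min_le_left (y1 * (b - a) / 2) (min (y2 * (b - a) / 2) (y1 / 2))
      rw [← hE] at this
      calc tp * Δf + b * (tq * Δg) ≤ t0 * D := hkey1
        _ = E := ht0D
        _ ≤ y1 * (b - a) / 2 := this
    have hkey2 : tp * Δf + a * (tq * Δg) ≤ t0 * D := by
      have h1 : tp * Δf ≤ t0 * Δf := mul_le_mul_of_nonneg_right htpt0 hΔf0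
      have h2 : a * (tq * Δg) ≤ a * (t0 * Δg) :=
        mul_le_mul_of_nonneg_left (mul_le_mul_of_nonneg_right htqt0 hΔg0) ha0
      have h3 : 0 ≤ t0 * (b * Δg) := mul_nonneg (le_of_lt ht00) (mul_nonneg (le_of_lt hb0) hΔg0)
      have h4 : 0 ≤ t0 * Δg := mul_nonneg (le_of_lt ht00) hΔg0
      rw [hD]; nlinarith
    have hbd2 : tp * Δf + a * (tq * Δg) ≤ y2 * (b - a) / 2 := by
      have h5 := min_le_left (y2 * (b - a) / 2) (y1 / 2)
      have h6 := min_le_right (y1 * (b - a) / 2) (min (y2 * (b - a) / 2) (y1 / 2))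
      rw [← hE] at h6
      calc tp * Δf + a * (tq * Δg) ≤ t0 * D := hkey2
        _ = E := ht0D
        _ ≤ min (y2 * (b - a) / 2) (y1 / 2) := h6
        _ ≤ y2 * (b - a) / 2 := h5
    have hbd3 : tq * Δg ≤ y1 / 2 := by
      have h5 := min_le_right (y2 * (b - a) / 2) (y1 / 2)
      have h6 := min_le_right (y1 * (b - a) / 2) (min (y2 * (b - a) / 2) (y1 / 2))
      rw [← hE] at h6
      have h1 : tq * Δg ≤ t0 * Δg := mul_le_mul_of_nonneg_right htqt0 hΔg0
      have h2 : t0 * Δg ≤ t0 * D := by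
        have h3 : 0 ≤ t0 * Δf := mul_nonneg (le_of_lt ht00) hΔf0
        have h4 : 0 ≤ t0 * (b * Δg) := mul_nonneg (le_of_lt ht00) (mul_nonneg (le_of_lt hb0) hΔg0)
        have h5' : 0 ≤ t0 * (a * Δg) := mul_nonneg (le_of_lt ht00) (mul_nonneg ha0 hΔg0)
        rw [hD]; nlinarith
      calc tq * Δg ≤ t0 * Δg := h1
        _ ≤ t0 * D := h2
        _ = E := ht0D
        _ ≤ min (y2 * (b - a) / 2) (y1 / 2) := h6
        _ ≤ y1 / 2 := h5
    obtain ⟨hmle, hmlt⟩ := move_obj f g hdm Z hZ hp hq σ hadj hρ htp0 htq0 hbd1 hbd2 hbd3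
    have hne10 : σ ≠ σ1 := (swp_ne_self σ hadj).symm
    have hp' : IsDist (moveD p σ σ1 tp) := moveD_isDist hp hne10 htp0 htpσ
    have hq' : IsDist (moveD q σ σ1 tq) := moveD_isDist hq hne10 htq0 htqσ
    have hdiag : p = q → moveD p σ σ1 tp = moveD q σ σ1 tq := by
      intro hpq
      have : tp = tq := by rw [htp, htq, hpq]
      rw [hpq, this]
    have hpos : 0 < tp * Δf ∨ 0 < tq * Δg := by
      rcases hbad with ⟨h1, h2⟩ | ⟨h1, h2⟩
      · left
        apply mul_pos _ h2
        rw [htp]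
        exact lt_min ht00 h1
      · right
        apply mul_pos _ h2
        rw [htq]
        exact lt_min ht00 h1
    have hle := hmle CA thA hthA hCA
    have hlt := hmlt CB thB hthB hCB hpos
    have := HLex _ _ hp' hq' hdiag hle
    linarith
  · push_neg at hbad
    constructor
    · intro hpσ
      have h0 : Δf = 0 := le_antisymm (hbad.1 hpσ) hΔf0
      rw [hΔf] at h0
      linarith
    · intro hqσ
      have h0 : Δg = 0 := le_antisymm (hbad.2 hqσ) hΔg0
      rw [hΔg] at h0
      linarith

-- ===================== CONTINUOUS CONVEX EXTENSION =====================

lemma exists_ext (θ : ℝ → ℝ) (hθ : ConvexOn ℝ (Set.Ici 0) θ) :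
    ∃ θt : ℝ → ℝ, (∀ t : ℝ, t ≠ 0 → θt t = θ t) ∧ θt 0 ≤ θ 0 ∧
      ConvexOn ℝ (Set.Ici 0) θt ∧ ContinuousOn θt (Set.Ici 0) := by
  classical
  set s : ℝ → ℝ := fun t => (θ 1 - θ t) / (1 - t) with hs
  have hs_mono : ∀ t1 t2 : ℝ, 0 < t1 → t1 ≤ t2 → t2 < 1 → s t1 ≤ s t2 := by
    intro t1 t2 h0 h12 h21
    set d := (θ 1 - θ t1) / (1 - t1) with hd'
    have h1t1 : (0:ℝ) < 1 - t1 := by linarith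
    have h1t2 : (0:ℝ) < 1 - t2 := by linarith
    have hdd : (1 - t1) * d = θ 1 - θ t1 := by rw [hd']; field_simp
    have hch := chord_le hθ (le_of_lt h0) (by linarith : t1 < 1) h12 (le_of_lt h21)
    -- hch : θ t2 ≤ θ t1 + (t2 - t1) * ((θ 1 - θ t1) / (1 - t1))
    rw [← hd'] at hch
    show d ≤ (θ 1 - θ t2) / (1 - t2)
    rw [le_div_iff₀ h1t2]
    linarith
  have hs_lb : ∀ t : ℝ, 0 < t → t < 1 → θ 1 - θ 0 ≤ s t := by
    intro t h0 h1
    have hch := chord_le hθ (le_refl (0:ℝ)) one_pos (le_of_lt h0) (le_of_lt h1)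
    simp only [sub_zero, div_one] at hch
    show θ 1 - θ 0 ≤ (θ 1 - θ t) / (1 - t)
    rw [le_div_iff₀ (by linarith : (0:ℝ) < 1 - t)]
    nlinarith
  set S : Set ℝ := s '' Set.Ioo 0 1 with hS
  have hSne : S.Nonempty := ⟨s (1/2), ⟨1/2, by norm_num, rfl⟩⟩
  have hSbdd : BddBelow S := by
    refine ⟨θ 1 - θ 0, ?_⟩
    rintro v ⟨t, ht, rfl⟩
    exact hs_lb t ht.1 ht.2
  set Ls := sInf S with hLs
  set L := θ 1 - Ls with hL
  have hLs_le : ∀ t : ℝ, 0 < t → t < 1 → Ls ≤ s t := by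
    intro t h0 h1
    exact csInf_le hSbdd ⟨t, ⟨h0, h1⟩, rfl⟩
  have hLs_lb : θ 1 - θ 0 ≤ Ls := by
    apply le_csInf hSne
    rintro v ⟨t, ht, rfl⟩
    exact hs_lb t ht.1 ht.2
  have hL0 : L ≤ θ 0 := by rw [hL]; linarith
  -- tendsto of s
  have htend_s : Filter.Tendsto s (nhdsWithin 0 (Set.Ioi 0)) (nhds Ls) := by
    rw [Metric.tendsto_nhdsWithin_nhds]
    intro ε hε
    have : Ls < Ls + ε := by linarith
    obtain ⟨v, hvS, hvlt⟩ := exists_lt_of_csInf_lt hSne (show sInf S < Ls + ε from this)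
    obtain ⟨t1, ht1, rfl⟩ := hvS
    refine ⟨t1, ht1.1, ?_⟩
    intro t ht htd
    rw [Real.dist_eq, abs_lt] at htd ⊢
    have ht0 : 0 < t := ht
    have htt1 : t < t1 := by
      rcases htd with ⟨_, h⟩
      simpa [abs_of_pos ht0] using (by linarith : t - 0 < t1)
    have h1 : s t ≤ s t1 := hs_mono t t1 ht0 (le_of_lt htt1) ht1.2
    have h2 : Ls ≤ s t := hLs_le t ht0 (lt_trans htt1 ht1.2)
    constructor <;> linarith
  -- tendsto of θ at 0+
  have htendθ : Filter.Tendsto θ (nhdsWithin 0 (Set.Ioi 0)) (nhds L) := by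
    have hev : ∀ᶠ t in nhdsWithin 0 (Set.Ioi 0), θ 1 - (1 - t) * s t = θ t := by
      filter_upwards [Ioo_mem_nhdsGT_of_mem (by norm_num : (0:ℝ) ∈ Set.Ico 0 1)] with t ht
      have h1t : (1:ℝ) - t ≠ 0 := by
        have := ht.2; intro h; rw [sub_eq_zero] at h; rw [← h] at this; exact lt_irrefl _ this
      rw [hs]
      field_simp
      ring
    apply Filter.Tendsto.congr' hev
    have h1 : Filter.Tendsto (fun t : ℝ => (1:ℝ) - t) (nhdsWithin 0 (Set.Ioi 0)) (nhds 1) := by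
      have hid : Filter.Tendsto (fun t : ℝ => t) (nhdsWithin 0 (Set.Ioi 0)) (nhds 0) :=
        Filter.tendsto_id.mono_left nhdsWithin_le_nhds
      have := Filter.Tendsto.sub (tendsto_const_nhds (x := (1:ℝ))) hid
      simpa using this
    have := Filter.Tendsto.sub (tendsto_const_nhds (x := θ 1)) (h1.mul htend_s)
    simpa [hL] using this
  set θt : ℝ → ℝ := fun t => if t = 0 then L else θ t with hθt
  have hθteq : ∀ t : ℝ, t ≠ 0 → θt t = θ t := by
    intro t ht; rw [hθt]; simp [ht]
  have hθt0 : θt 0 = L := by rw [hθt]; simp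
  -- the key chord claim at 0
  have hclaim : ∀ c y : ℝ, 0 < c → c < y → θ c ≤ (1 - c / y) * L + (c / y) * θ y := by
    intro c y hc hcy
    have hy : 0 < y := lt_trans hc hcy
    have hev : ∀ᶠ t in nhdsWithin 0 (Set.Ioi 0),
        θ c ≤ θ t + (c - t) * ((θ y - θ t) / (y - t)) := by
      filter_upwards [Ioo_mem_nhdsGT_of_mem (by constructor <;> linarith : (0:ℝ) ∈ Set.Ico 0 c)] with t ht
      have ht1 := ht.1
      have ht2 := ht.2
      exact chord_le hθ (le_of_lt ht1) (by linarith : t < y) (le_of_lt ht2) (le_of_lt hcy)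
    have htrhs : Filter.Tendsto (fun t => θ t + (c - t) * ((θ y - θ t) / (y - t)))
        (nhdsWithin 0 (Set.Ioi 0)) (nhds (L + c * ((θ y - L) / y))) := by
      have hid : Filter.Tendsto (fun t : ℝ => t) (nhdsWithin 0 (Set.Ioi 0)) (nhds 0) :=
        Filter.tendsto_id.mono_left nhdsWithin_le_nhds
      have h1 : Filter.Tendsto (fun t : ℝ => c - t) (nhdsWithin 0 (Set.Ioi 0)) (nhds c) := by
        have := Filter.Tendsto.sub (tendsto_const_nhds (x := c)) hid
        simpa using this
      have h2 : Filter.Tendsto (fun t : ℝ => θ y - θ t) (nhdsWithin 0 (Set.Ioi 0)) (nhds (θ y - L)) :=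
        Filter.Tendsto.sub (tendsto_const_nhds (x := θ y)) htendθ
      have h3 : Filter.Tendsto (fun t : ℝ => y - t) (nhdsWithin 0 (Set.Ioi 0)) (nhds y) := by
        have := Filter.Tendsto.sub (tendsto_const_nhds (x := y)) hid
        simpa using this
      exact Filter.Tendsto.add htendθ (h1.mul (h2.div h3 (ne_of_gt hy)))
    have hle := ge_of_tendsto htrhs hev
    calc θ c ≤ L + c * ((θ y - L) / y) := hle
      _ = (1 - c / y) * L + (c / y) * θ y := by field_simp; ring
  -- convexity
  have hconv : ConvexOn ℝ (Set.Ici 0) θt := by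
    refine ⟨convex_Ici 0, ?_⟩
    intro x hx y hy lam mu hlam hmu hlm
    simp only [smul_eq_mul]
    rw [Set.mem_Ici] at hx hy
    rcases eq_or_lt_of_le hx with hx0 | hx0 <;> rcases eq_or_lt_of_le hy with hy0 | hy0
    · -- x = y = 0
      rw [← hx0, ← hy0, show lam * (0:ℝ) + mu * 0 = (0:ℝ) from by ring, hθt0,
        ← add_mul, hlm, one_mul]
    · -- x = 0 < y
      rw [← hx0, hθt0, show lam * (0:ℝ) + mu * y = mu * y from by ring]
      rcases eq_or_lt_of_le hmu with hmu0 | hmu0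
      · have hlam1 : lam = 1 := by linarith
        rw [← hmu0, zero_mul, zero_mul, hθt0, add_zero, hlam1, one_mul]
      · rcases eq_or_lt_of_le (by linarith : mu ≤ 1) with hmu1 | hmu1
        · have hlam0 : lam = 0 := by linarith
          rw [hmu1, one_mul, one_mul, hlam0, zero_mul, zero_add]
        · have hmuy : 0 < mu * y := mul_pos hmu0 hy0
          rw [hθteq _ (ne_of_gt hmuy), hθteq _ (ne_of_gt hy0)]
          have hcl := hclaim (mu * y) y hmuy (by nlinarith)
          have hcy' : mu * y / y = mu := by field_simp
          rw [hcy'] at hcl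
          have hlammu : lam = 1 - mu := by linarith
          calc θ (mu * y) ≤ (1 - mu) * L + mu * θ y := hcl
            _ = lam * L + mu * θ y := by rw [hlammu]
    · -- y = 0 < x
      rw [← hy0, hθt0, show lam * x + mu * (0:ℝ) = lam * x from by ring]
      rcases eq_or_lt_of_le hlam with hlam0 | hlam0
      · have hmu1 : mu = 1 := by linarith
        rw [← hlam0, zero_mul, zero_mul, hθt0, zero_add, hmu1, one_mul]
      · rcases eq_or_lt_of_le (by linarith : lam ≤ 1) with hlam1 | hlam1
        · have hmu0 : mu = 0 := by linarith
          rw [hlam1, one_mul, one_mul, hmu0, zero_mul, add_zero]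
        · have hlx : 0 < lam * x := mul_pos hlam0 hx0
          rw [hθteq _ (ne_of_gt hlx), hθteq _ (ne_of_gt hx0)]
          have hcl := hclaim (lam * x) x hlx (by nlinarith)
          have hcx' : lam * x / x = lam := by field_simp
          rw [hcx'] at hcl
          have hmulam : mu = 1 - lam := by linarith
          calc θ (lam * x) ≤ (1 - lam) * L + lam * θ x := hcl
            _ = lam * θ x + mu * L := by rw [hmulam]; ring
    · -- both positive
      have hcombo : 0 < lam * x + mu * y := by
        rcases eq_or_lt_of_le hlam with h | h
        · have hmu1 : mu = 1 := by linarith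
          rw [← h, hmu1]; nlinarith
        · nlinarith
      rw [hθteq _ (ne_of_gt hcombo), hθteq _ (ne_of_gt hx0), hθteq _ (ne_of_gt hy0)]
      have := hθ.2 (Set.mem_Ici.2 (le_of_lt hx0)) (Set.mem_Ici.2 (le_of_lt hy0)) hlam hmu hlm
      simpa using this
  -- continuity
  have hcont : ContinuousOn θt (Set.Ici 0) := by
    have hconvIoi : ConvexOn ℝ (Set.Ioi 0) θ := hθ.subset Set.Ioi_subset_Ici_self (convex_Ioi 0)
    have hcθ : ContinuousOn θ (Set.Ioi 0) := ConvexOn.continuousOn isOpen_Ioi hconvIoi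
    intro t0 ht0
    rcases eq_or_lt_of_le (Set.mem_Ici.1 ht0) with h0 | h0
    · -- t0 = 0
      rw [← h0]
      unfold ContinuousWithinAt
      rw [hθt0]
      have hsplit : Set.Ici (0:ℝ) = {0} ∪ Set.Ioi 0 := by
        ext t
        simp only [Set.mem_Ici, Set.mem_union, Set.mem_singleton_iff, Set.mem_Ioi]
        constructor
        · intro h
          rcases eq_or_lt_of_le h with h' | h'
          · exact Or.inl h'.symm
          · exact Or.inr h'
        · rintro (h | h)
          · rw [h]
          · exact le_of_lt h
      rw [hsplit, nhdsWithin_union]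
      rw [Filter.tendsto_sup]
      constructor
      · rw [nhdsWithin_singleton]
        rw [Filter.tendsto_pure_left]
        intro sU hsU
        rw [hθt0]
        exact mem_of_mem_nhds hsU
      · apply Filter.Tendsto.congr' _ htendθ
        filter_upwards [self_mem_nhdsWithin] with t ht
        exact (hθteq t (ne_of_gt ht)).symm
    · -- t0 > 0
      have hcat : ContinuousAt θ t0 := hcθ.continuousAt (isOpen_Ioi.mem_nhds h0)
      have hev : θ =ᶠ[nhds t0] θt := by
        have : Set.Ioi (0:ℝ) ∈ nhds t0 := isOpen_Ioi.mem_nhds h0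
        filter_upwards [this] with t ht
        exact (hθteq t (ne_of_gt ht)).symm
      exact (hcat.congr hev).continuousWithinAt
  exact ⟨θt, hθteq, by rw [hθt0]; exact hL0, hconv, hcont⟩

-- ===================== COMPACTNESS / ATTAINMENT =====================

lemma isCompact_dists : IsCompact {p : Perms V → ℝ | IsDist p} := by
  have hsub : {p : Perms V → ℝ | IsDist p} ⊆ Set.pi Set.univ (fun _ : Perms V => Set.Icc (0:ℝ) 1) := by
    intro p hp
    intro σ _
    refine ⟨hp.1 σ, ?_⟩
    have := Finset.single_le_sum (f := p) (fun τ _ => hp.1 τ) (Finset.mem_univ σ)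
    rw [hp.2] at this
    exact this
  have hclosed : IsClosed {p : Perms V → ℝ | IsDist p} := by
    have : {p : Perms V → ℝ | IsDist p}
        = (⋂ σ : Perms V, {p : Perms V → ℝ | 0 ≤ p σ}) ∩ {p : Perms V → ℝ | ∑ σ, p σ = 1} := by
      ext p
      simp only [Set.mem_inter_iff, Set.mem_iInter, Set.mem_setOf_eq]
      rfl
    rw [this]
    apply IsClosed.inter
    · exact isClosed_iInter (fun σ => isClosed_Ici.preimage (continuous_apply σ))
    · exact (isClosed_singleton (x := (1:ℝ))).preimage
        (continuous_finset_sum _ (fun σ _ => continuous_apply σ))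
  exact IsCompact.of_isClosed_subset
    (isCompact_univ_pi (fun _ => isCompact_Icc)) hclosed hsub

lemma objZ_continuousOn (f g : Finset V → ℝ) (hdm : DualModular f g) (Z : Finset V)
    (C : ℝ) (th : ℝ → ℝ) (hth : ContinuousOn th (Set.Ici 0)) :
    ContinuousOn (fun z : (Perms V → ℝ) × (Perms V → ℝ) => ObjZ f g Z C th z.1 z.2)
      {z | IsDist z.1 ∧ IsDist z.2} := by
  unfold ObjZ
  apply continuousOn_finset_sum
  intro u _
  have hxc : Continuous (fun z : (Perms V → ℝ) × (Perms V → ℝ) => distVal f z.1 u) := by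
    unfold distVal
    exact continuous_finset_sum _ (fun σ _ => ((continuous_apply σ).comp continuous_fst).mul continuous_const)
  have hyc : Continuous (fun z : (Perms V → ℝ) × (Perms V → ℝ) => distVal g z.2 u) := by
    unfold distVal
    exact continuous_finset_sum _ (fun σ _ => ((continuous_apply σ).comp continuous_snd).mul continuous_const)
  by_cases hu : u ∈ Z
  · simp only [if_pos hu]
    exact (hyc.mul continuous_const).continuousOn
  · simp only [if_neg hu]
    apply ContinuousOn.mul hyc.continuousOn
    apply ContinuousOn.comp hth
    · apply ContinuousOn.div hxc.continuousOn hyc.continuousOn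
      intro z hz
      exact ne_of_gt (distVal_pos hdm.g_strictMono hz.2 u)
    · intro z hz
      exact Set.mem_Ici.2 (div_nonneg (distVal_nonneg hdm.f_mono hz.1 u)
        (le_of_lt (distVal_pos hdm.g_strictMono hz.2 u)))

lemma exists_two_stage_min {W : Set ((Perms V → ℝ) × (Perms V → ℝ))}
    (hWc : IsCompact W) (hWne : W.Nonempty)
    {KA KB : (Perms V → ℝ) × (Perms V → ℝ) → ℝ}
    (hKA : ContinuousOn KA W) (hKB : ContinuousOn KB W) :
    ∃ z ∈ W, (∀ z' ∈ W, KA z ≤ KA z') ∧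
      (∀ z' ∈ W, KA z' ≤ KA z → KB z ≤ KB z') := by
  obtain ⟨z0, hz0W, hz0min⟩ := hWc.exists_isMinOn hWne hKA
  rw [isMinOn_iff] at hz0min
  set M := W ∩ KA ⁻¹' (Set.Iic (KA z0)) with hM
  have hMclosed : IsClosed M :=
    hKA.preimage_isClosed_of_isClosed hWc.isClosed isClosed_Iic
  have hMcompact : IsCompact M :=
    IsCompact.of_isClosed_subset hWc hMclosed Set.inter_subset_left
  have hMne : M.Nonempty := ⟨z0, hz0W, by simp⟩
  obtain ⟨z, hzM, hzmin⟩ := hMcompact.exists_isMinOn hMne (hKB.mono Set.inter_subset_left)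
  rw [isMinOn_iff] at hzmin
  have hzW : z ∈ W := hzM.1
  have hzKA : KA z = KA z0 := le_antisymm hzM.2 (hz0min z hzW)
  refine ⟨z, hzW, ?_, ?_⟩
  · intro z' hz'
    rw [hzKA]
    exact hz0min z' hz'
  · intro z' hz' hle
    apply hzmin
    refine ⟨hz', ?_⟩
    simp only [Set.mem_preimage, Set.mem_Iic]
    rw [← hzKA]
    exact hle

lemma objZ_alloc_invariant (f g : Finset V → ℝ) (Z : Finset V) (C : ℝ) (th : ℝ → ℝ)
    {p q p' q' : Perms V → ℝ} (hx : distVal f p = distVal f p') (hy : distVal g q = distVal g q') :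
    ObjZ f g Z C th p q = ObjZ f g Z C th p' q' := by
  unfold ObjZ
  rw [hx, hy]

-- ===================== BRIDGE LEMMAS =====================

lemma phi_alloc_invariant (θ : ℝ → ℝ) (f g : Finset V → ℝ)
    {p q p' q' : Perms V → ℝ} (hx : distVal f p = distVal f p') (hy : distVal g q = distVal g q') :
    Phi θ f g p q = Phi θ f g p' q' := by
  unfold Phi Dtheta
  rw [hx, hy]

lemma solDensity_alloc_invariant (f g : Finset V → ℝ)
    {p q p' q' : Perms V → ℝ} (hx : distVal f p = distVal f p') (hy : distVal g q = distVal g q') :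
    solDensity f g p q = solDensity f g p' q' := by
  unfold solDensity
  rw [hx, hy]

lemma objZ_empty (f g : Finset V → ℝ) (C : ℝ) (th : ℝ → ℝ) (p q : Perms V → ℝ) :
    ObjZ f g ∅ C th p q = Phi th f g p q := by
  unfold ObjZ Phi Dtheta
  apply Finset.sum_congr rfl
  intro u _
  rw [if_neg (Finset.notMem_empty u)]

lemma maximin_phi_eq (θ : ℝ → ℝ) (f g : Finset V → ℝ) (hdm : DualModular f g)
    {p q : Perms V → ℝ} (hp : IsDist p) (hq : IsDist q)
    (hmm : LocallyMaximinSol f g p q)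
    (U : Finset V) (hU : ∀ u, u ∈ U ↔ ∀ τ : Perms V, permVal f τ u = 0)
    (θt : ℝ → ℝ) (hθteq : ∀ t : ℝ, t ≠ 0 → θt t = θ t) :
    Phi θ f g p q = ObjZ f g U (θ 0) θt p q := by
  unfold Phi Dtheta ObjZ
  apply Finset.sum_congr rfl
  intro u _
  by_cases hu : u ∈ U
  · rw [if_pos hu]
    have hx0 : distVal f p u = 0 :=
      Finset.sum_eq_zero (fun τ _ => by rw [(hU u).1 hu τ, mul_zero])
    rw [hx0, zero_div]
  · rw [if_neg hu]
    have hxne : distVal f p u ≠ 0 := by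
      intro h0
      exact hu ((hU u).2 (maximin_zero_null f g hdm hp hq hmm h0))
    have hyne : distVal g q u ≠ 0 := ne_of_gt (distVal_pos hdm.g_strictMono hq u)
    rw [hθteq _ (div_ne_zero hxne hyne)]

lemma objZ_le_phi (θ : ℝ → ℝ) (f g : Finset V → ℝ) (hdm : DualModular f g)
    {p q : Perms V → ℝ} (hp : IsDist p) (hq : IsDist q)
    (U : Finset V) (hU : ∀ u, u ∈ U ↔ ∀ τ : Perms V, permVal f τ u = 0)
    (θt : ℝ → ℝ) (hθteq : ∀ t : ℝ, t ≠ 0 → θt t = θ t) (hθt0 : θt 0 ≤ θ 0) :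
    ObjZ f g U (θ 0) θt p q ≤ Phi θ f g p q := by
  unfold Phi Dtheta ObjZ
  apply Finset.sum_le_sum
  intro u _
  have hy := distVal_pos hdm.g_strictMono hq u
  by_cases hu : u ∈ U
  · rw [if_pos hu]
    have hx0 : distVal f p u = 0 :=
      Finset.sum_eq_zero (fun τ _ => by rw [(hU u).1 hu τ, mul_zero])
    rw [hx0, zero_div]
  · rw [if_neg hu]
    apply mul_le_mul_of_nonneg_left _ (le_of_lt hy)
    by_cases hr : distVal f p u / distVal g q u = 0
    · rw [hr]
      exact hθt0
    · rw [hθteq _ hr]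

-- ===================== BRANCH HELPERS =====================

lemma S_branch (θ : ℝ → ℝ) (f g : Finset V → ℝ) (hdm : DualModular f g)
    (hθ : ConvexOn ℝ (Set.Ici 0) θ) (hsc : StrictConvexOn ℝ (Set.Ici 0) θ)
    (p0 q0 : Perms V → ℝ) (hp0 : IsDist p0) (hq0 : IsDist q0)
    (hminlex : ∀ p' q' : Perms V → ℝ, IsDist p' → IsDist q' → (p0 = q0 → p' = q') →
      Phi θ f g p0 q0 ≤ Phi θ f g p' q') :
    ∃ ph qh : Perms V → ℝ, IsDist ph ∧ IsDist qh ∧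
      distVal f ph = distVal f p0 ∧ distVal g qh = distVal g q0 ∧
      LocallyMaximinSol f g ph qh ∧ (p0 = q0 → ph = qh) := by
  classical
  apply engine f g hdm p0 q0 hp0 hq0
  intro p1 q1 hp1 hq1 hx1 hy1 hdiag σ w1 w2 hadj hρ hsupp
  have hρ' : solDensity f g p1 q1 w1 < solDensity f g p1 q1 w2 := by
    rw [solDensity_alloc_invariant f g hx1 hy1]
    exact hρ
  have HLex : ∀ p' q' : Perms V → ℝ, IsDist p' → IsDist q' → (p1 = q1 → p' = q') →
      ObjZ f g ∅ (θ 0) θ p' q' ≤ ObjZ f g ∅ (θ 0) θ p1 q1 →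
      ObjZ f g ∅ (θ 0) θ p1 q1 ≤ ObjZ f g ∅ (θ 0) θ p' q' := by
    intro p' q' hp' hq' hguard _
    rw [objZ_empty, objZ_empty]
    rw [phi_alloc_invariant θ f g hx1 hy1]
    exact hminlex p' q' hp' hq' (fun he => hguard (hdiag he))
  exact provider f g hdm ∅ (by simp) (CA := θ 0) (CB := θ 0) (thA := θ) (thB := θ)
    hθ hsc (le_refl _) (le_refl _) hp1 hq1 HLex σ w1 w2 hadj hρ' hsupp

lemma K_branch (θ : ℝ → ℝ) (f g : Finset V → ℝ) (hdm : DualModular f g)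
    (hθ : ConvexOn ℝ (Set.Ici 0) θ)
    (W : Set ((Perms V → ℝ) × (Perms V → ℝ)))
    (hWc : IsCompact W) (hWne : W.Nonempty)
    (hWsub : W ⊆ {z | IsDist z.1 ∧ IsDist z.2})
    (hWmem : ∀ z ∈ W, ∀ p' q' : Perms V → ℝ, IsDist p' → IsDist q' →
      (z.1 = z.2 → p' = q') → (p', q') ∈ W) :
    ∃ z ∈ W, ∃ ph qh : Perms V → ℝ, IsDist ph ∧ IsDist qh ∧
      LocallyMaximinSol f g ph qh ∧ (z.1 = z.2 → ph = qh) ∧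
      ∀ z' ∈ W, Phi θ f g ph qh ≤ Phi θ f g z'.1 z'.2 := by
  classical
  obtain ⟨θt, hθteq, hθt0, hθtconv, hθtcont⟩ := exists_ext θ hθ
  set U : Finset V := Finset.univ.filter (fun u => ∀ τ : Perms V, permVal f τ u = 0) with hUdef
  have hUmem : ∀ u, u ∈ U ↔ ∀ τ : Perms V, permVal f τ u = 0 := by
    intro u
    rw [hUdef, Finset.mem_filter]
    simp
  have hZnull : ∀ u ∈ U, ∀ τ : Perms V, permVal f τ u = 0 := fun u hu => (hUmem u).1 hu
  set thB : ℝ → ℝ := fun t => t ^ 2 with hthB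
  have hsqstrict : StrictConvexOn ℝ (Set.Ici 0) thB := strictConvexOn_pow (by norm_num)
  have hsqcont : ContinuousOn thB (Set.Ici 0) := (continuous_pow 2).continuousOn
  set KA := fun z : (Perms V → ℝ) × (Perms V → ℝ) => ObjZ f g U (θ 0) θt z.1 z.2 with hKA
  set KB := fun z : (Perms V → ℝ) × (Perms V → ℝ) => ObjZ f g U 0 thB z.1 z.2 with hKB
  have hKAc : ContinuousOn KA W :=
    (objZ_continuousOn f g hdm U (θ 0) θt hθtcont).mono hWsub
  have hKBc : ContinuousOn KB W :=
    (objZ_continuousOn f g hdm U 0 thB hsqcont).mono hWsub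
  obtain ⟨zh, hzhW, hKAmin, hlex⟩ := exists_two_stage_min hWc hWne hKAc hKBc
  have hzhd := hWsub hzhW
  have HD : ∀ p1 q1 : Perms V → ℝ, IsDist p1 → IsDist q1 →
      distVal f p1 = distVal f zh.1 → distVal g q1 = distVal g zh.2 → (zh.1 = zh.2 → p1 = q1) →
      ∀ σ : Perms V, ∀ w1 w2 : V, (σ w2 : ℕ) = (σ w1 : ℕ) + 1 →
      solDensity f g zh.1 zh.2 w1 < solDensity f g zh.1 zh.2 w2 →
      (0 < p1 σ ∨ 0 < q1 σ) →
      (0 < p1 σ → permVal f (swp σ w1 w2) w2 = permVal f σ w2) ∧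
      (0 < q1 σ → permVal g (swp σ w1 w2) w2 = permVal g σ w2) := by
    intro p1 q1 hp1 hq1 hx1 hy1 hdiag σ w1 w2 hadj hρ hsupp
    have hρ' : solDensity f g p1 q1 w1 < solDensity f g p1 q1 w2 := by
      rw [solDensity_alloc_invariant f g hx1 hy1]
      exact hρ
    have HLex : ∀ p' q' : Perms V → ℝ, IsDist p' → IsDist q' → (p1 = q1 → p' = q') →
        ObjZ f g U (θ 0) θt p' q' ≤ ObjZ f g U (θ 0) θt p1 q1 →
        ObjZ f g U 0 thB p1 q1 ≤ ObjZ f g U 0 thB p' q' := by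
      intro p' q' hp' hq' hguard hle
      have hz'W : (p', q') ∈ W :=
        hWmem zh hzhW p' q' hp' hq' (fun he => hguard (hdiag he))
      have hKAeq : ObjZ f g U (θ 0) θt p1 q1 = KA zh :=
        objZ_alloc_invariant f g U (θ 0) θt hx1 hy1
      have hKBeq : ObjZ f g U 0 thB p1 q1 = KB zh :=
        objZ_alloc_invariant f g U 0 thB hx1 hy1
      rw [hKAeq] at hle
      have h2 := hlex (p', q') hz'W hle
      rw [hKBeq]
      exact h2
    exact provider f g hdm U hZnull (CA := θ 0) (CB := 0) (thA := θt) (thB := thB)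
      hθtconv hsqstrict hθt0 (by rw [hthB]; norm_num) hp1 hq1 HLex σ w1 w2 hadj hρ' hsupp
  obtain ⟨ph, qh, hph, hqh, hxph, hyqh, hmm, hdout⟩ :=
    engine f g hdm zh.1 zh.2 hzhd.1 hzhd.2 HD
  refine ⟨zh, hzhW, ph, qh, hph, hqh, hmm, hdout, ?_⟩
  intro z' hz'W
  have hd' := hWsub hz'W
  calc Phi θ f g ph qh = ObjZ f g U (θ 0) θt ph qh :=
        maximin_phi_eq θ f g hdm hph hqh hmm U hUmem θt hθteq
    _ = KA zh := objZ_alloc_invariant f g U (θ 0) θt hxph hyqh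
    _ ≤ KA z' := hKAmin z' hz'W
    _ ≤ Phi θ f g z'.1 z'.2 := objZ_le_phi θ f g hdm hd'.1 hd'.2 U hUmem θt hθteq hθt0

-- ===================== MAIN THEOREM =====================

theorem exists_locally_maximin_optimal_solution (f g : Finset V → ℝ)
    (hdm : DualModular f g) (θ : ℝ → ℝ) (hθ : ConvexOn ℝ (Set.Ici 0) θ)
    (p q : Perms V → ℝ) (hp : IsDist p) (hq : IsDist q)
    (hmin : ∀ p' q' : Perms V → ℝ, IsDist p' → IsDist q' →
      Phi θ f g p q ≤ Phi θ f g p' q') :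
    (∃ ph qh : Perms V → ℝ, IsDist ph ∧ IsDist qh ∧ LocallyMaximinSol f g ph qh ∧
      (∀ p' q' : Perms V → ℝ, IsDist p' → IsDist q' →
        Phi θ f g ph qh ≤ Phi θ f g p' q') ∧
      (StrictConvexOn ℝ (Set.Ici 0) θ →
        distVal f ph = distVal f p ∧ distVal g qh = distVal g q)) ∧
    (∀ r : Perms V → ℝ, IsDist r →
      (∀ r' : Perms V → ℝ, IsDist r' → Phi θ f g r r ≤ Phi θ f g r' r') →
      ∃ rh : Perms V → ℝ, IsDist rh ∧ LocallyMaximinSol f g rh rh ∧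
        (∀ r' : Perms V → ℝ, IsDist r' → Phi θ f g rh rh ≤ Phi θ f g r' r') ∧
        (StrictConvexOn ℝ (Set.Ici 0) θ →
          distVal f rh = distVal f r ∧ distVal g rh = distVal g r)) := by
  classical
  constructor
  · -- joint part
    by_cases hsc : StrictConvexOn ℝ (Set.Ici 0) θ
    · obtain ⟨ph, qh, hph, hqh, hxph, hyqh, hmm, _⟩ :=
        S_branch θ f g hdm hθ hsc p q hp hq
          (fun p' q' hp' hq' _ => hmin p' q' hp' hq')
      refine ⟨ph, qh, hph, hqh, hmm, ?_, fun _ => ⟨hxph, hyqh⟩⟩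
      intro p' q' hp' hq'
      rw [phi_alloc_invariant θ f g hxph hyqh]
      exact hmin p' q' hp' hq'
    · obtain ⟨z, hzW, ph, qh, hph, hqh, hmm, _, hminall⟩ :=
        K_branch θ f g hdm hθ ({p' : Perms V → ℝ | IsDist p'} ×ˢ {q' : Perms V → ℝ | IsDist q'})
          (isCompact_dists.prod isCompact_dists)
          ⟨(p, q), ⟨hp, hq⟩⟩
          (fun z hz => hz)
          (fun z _ p' q' hp' hq' _ => ⟨hp', hq'⟩)
      refine ⟨ph, qh, hph, hqh, hmm, ?_, fun hsc' => absurd hsc' hsc⟩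
      intro p' q' hp' hq'
      exact hminall (p', q') ⟨hp', hq'⟩
  · -- diagonal part
    intro r hr hrmin
    by_cases hsc : StrictConvexOn ℝ (Set.Ici 0) θ
    · obtain ⟨ph, qh, hph, hqh, hxph, hyqh, hmm, hdout⟩ :=
        S_branch θ f g hdm hθ hsc r r hr hr
          (fun p' q' hp' hq' hguard => by
            have hpq : p' = q' := hguard rfl
            rw [hpq]
            exact hrmin q' hq')
      have heq : ph = qh := hdout rfl
      subst heq
      refine ⟨ph, hph, hmm, ?_, fun _ => ⟨hxph, hyqh⟩⟩
      intro r' hr'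
      rw [phi_alloc_invariant θ f g hxph hyqh]
      exact hrmin r' hr'
    · obtain ⟨z, hzW, ph, qh, hph, hqh, hmm, hdout, hminall⟩ :=
        K_branch θ f g hdm hθ
          (({p' : Perms V → ℝ | IsDist p'} ×ˢ {q' : Perms V → ℝ | IsDist q'})
            ∩ {z | z.1 = z.2})
          ((isCompact_dists.prod isCompact_dists).inter_right
            (isClosed_eq continuous_fst continuous_snd))
          ⟨(r, r), ⟨⟨hr, hr⟩, rfl⟩⟩
          (fun z hz => hz.1)
          (fun z hz p' q' hp' hq' hguard => ⟨⟨hp', hq'⟩, hguard hz.2⟩)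
      have heq : ph = qh := hdout hzW.2
      subst heq
      refine ⟨ph, hph, hmm, ?_, fun hsc' => absurd hsc' hsc⟩
      intro r' hr'
      exact hminall (r', r') ⟨⟨hr', hr'⟩, rfl⟩
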